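/- arXiv:2203.10337 — 4 statements merged into one kernel-verified Lean document; each statement's English description precedes it below -/
import Mathlib

section
/- Let X and Y be simple graphs on m vertices and let X̃ and Ỹ be simple graphs on n ≥ m vertices. If X is isomorphic to a subgraph of X̃ and Y is isomorphic to a subgraph of Ỹ, then FS(X, Y) is isomorphic to a subgraph of FS(X̃, Ỹ); that is, there exists an injective map from the vertex set of FS(X, Y) to the vertex set of FS(X̃, Ỹ) that maps adjacent vertices to adjacent vertices. -/
open SimpleGraph

/-- The friends-and-strangers graph `FS X Y`: its vertices are the bijections from `V(X)`
to `V(Y)`, with `σ, τ` adjacent iff they differ by a swap along an edge of `X` whose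
images under `σ` form an edge of `Y`. -/
def FS {V W : Type*} (X : SimpleGraph V) (Y : SimpleGraph W) : SimpleGraph (V ≃ W) where
  Adj σ τ := ∃ a b : V, X.Adj a b ∧ Y.Adj (σ a) (σ b) ∧ τ a = σ b ∧ τ b = σ a ∧
      ∀ c : V, c ≠ a → c ≠ b → τ c = σ c
  symm := by
    constructor
    rintro σ τ ⟨a, b, hX, hY, h1, h2, h3⟩
    refine ⟨a, b, hX, ?_, h2.symm, h1.symm, fun c hca hcb => (h3 c hca hcb).symm⟩
    rw [h1, h2]; exact hY.symm
  loopless := by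
    constructor
    rintro σ ⟨a, b, hX, hY, h1, h2, h3⟩
    exact hY.ne h1

/-- `H` is isomorphic to a subgraph of `G`: there is an injective map on vertices sending
adjacent vertices to adjacent vertices. -/
def IsIsoToSubgraphOf {α β : Type*} (H : SimpleGraph α) (G : SimpleGraph β) : Prop :=
  ∃ f : α → β, Function.Injective f ∧ ∀ a b : α, H.Adj a b → G.Adj (f a) (f b)

/-- If `X, Y` are graphs on `m` vertices, `X', Y'` are graphs on `n ≥ m` vertices, `X` is
isomorphic to a subgraph of `X'` and `Y` is isomorphic to a subgraph of `Y'`, then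
`FS(X, Y)` is isomorphic to a subgraph of `FS(X', Y')`. -/
theorem stmt1 {V W V' W' : Type} [Fintype V] [Fintype W] [Fintype V'] [Fintype W']
    (m n : ℕ) (hmn : m ≤ n)
    (hV : Fintype.card V = m) (hW : Fintype.card W = m)
    (hV' : Fintype.card V' = n) (hW' : Fintype.card W' = n)
    (X : SimpleGraph V) (Y : SimpleGraph W) (X' : SimpleGraph V') (Y' : SimpleGraph W')
    (hX : IsIsoToSubgraphOf X X') (hY : IsIsoToSubgraphOf Y Y') :
    IsIsoToSubgraphOf (FS X Y) (FS X' Y') := by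
  classical
  obtain ⟨f, hf, hfadj⟩ := hX
  obtain ⟨g, hg, hgadj⟩ := hY
  -- the complements of the ranges have equal cardinality
  have hcard : Fintype.card ((Set.range f)ᶜ : Set V') =
      Fintype.card ((Set.range g)ᶜ : Set W') := by
    have h1 : Fintype.card (Set.range f) = m := by
      rw [Set.card_range_of_injective hf, hV]
    have h2 : Fintype.card (Set.range g) = m := by
      rw [Set.card_range_of_injective hg, hW]
    have c1 : Fintype.card ((Set.range f)ᶜ : Set V') = n - m := by
      rw [Fintype.card_compl_set, h1, hV']
    have c2 : Fintype.card ((Set.range g)ᶜ : Set W') = n - m := by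
      rw [Fintype.card_compl_set, h2, hW']
    rw [c1, c2]
  set e : ((Set.range f)ᶜ : Set V') ≃ ((Set.range g)ᶜ : Set W') :=
    Fintype.equivOfCardEq hcard with he
  set eV : V ⊕ ((Set.range f)ᶜ : Set V') ≃ V' :=
    (Equiv.sumCongr (Equiv.ofInjective f hf) (Equiv.refl _)).trans
      (Equiv.Set.sumCompl (Set.range f)) with heV
  set eW : W ⊕ ((Set.range g)ᶜ : Set W') ≃ W' :=
    (Equiv.sumCongr (Equiv.ofInjective g hg) (Equiv.refl _)).trans
      (Equiv.Set.sumCompl (Set.range g)) with heW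
  set Φ : (V ≃ W) → (V' ≃ W') :=
    fun σ => eV.symm.trans ((Equiv.sumCongr σ e).trans eW) with hΦ
  have heVf : ∀ a : V, eV (Sum.inl a) = f a := by
    intro a; simp [heV]
  have heWg : ∀ w : W, eW (Sum.inl w) = g w := by
    intro w; simp [heW]
  have heVc : ∀ (c : V') (hc : c ∈ (Set.range f)ᶜ), eV (Sum.inr ⟨c, hc⟩) = c := by
    intro c hc; simp [heV]
  have key : ∀ (σ : V ≃ W) (a : V), Φ σ (f a) = g (σ a) := by
    intro σ a
    have : eV.symm (f a) = Sum.inl a := by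
      rw [Equiv.symm_apply_eq, heVf]
    simp [hΦ, this, heWg]
  have keyc : ∀ (σ : V ≃ W) (c : V') (hc : c ∈ (Set.range f)ᶜ),
      Φ σ c = eW (Sum.inr (e ⟨c, hc⟩)) := by
    intro σ c hc
    have : eV.symm c = Sum.inr ⟨c, hc⟩ := by
      rw [Equiv.symm_apply_eq, heVc]
    simp [hΦ, this]
  refine ⟨Φ, ?_, ?_⟩
  · intro σ τ h
    ext a
    have := congrArg (fun ψ => ψ (f a)) h
    rw [key σ a, key τ a] at this
    exact hg this
  · rintro σ τ ⟨a, b, hXab, hYab, h1, h2, h3⟩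
    refine ⟨f a, f b, hfadj a b hXab, ?_, ?_, ?_, ?_⟩
    · rw [key σ a, key σ b]; exact hgadj _ _ hYab
    · rw [key τ a, key σ b, h1]
    · rw [key τ b, key σ a, h2]
    · intro c hca hcb
      by_cases hc : c ∈ Set.range f
      · obtain ⟨d, rfl⟩ := hc
        rw [key τ d, key σ d, h3 d (fun h => hca (by rw [h]))
          (fun h => hcb (by rw [h]))]
      · rw [keyc τ c hc, keyc σ c hc]
end

section
/- Let X and Y be simple graphs on the same number n of vertices. The girth of FS(X, Y) equals 4 if and only if either (i) X contains two vertex-disjoint edges and Y contains two vertex-disjoint edges, or (ii) X contains a triangle (a subgraph isomorphic to K_3) and Y contains a triangle. -/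
open SimpleGraph

section Aux

variable {V W : Type*}

/-- decompose an equation `swap a b x = y` with `x ≠ y`. -/
lemma swap_apply_cases {α : Type*} [DecidableEq α] {a b x y : α}
    (h : Equiv.swap a b x = y) (hxy : x ≠ y) :
    (a = x ∧ b = y) ∨ (b = x ∧ a = y) := by
  rcases eq_or_ne x a with rfl | hxa
  · rw [Equiv.swap_apply_left] at h
    exact Or.inl ⟨rfl, h⟩
  rcases eq_or_ne x b with rfl | hxb
  · rw [Equiv.swap_apply_right] at h
    exact Or.inr ⟨rfl, h⟩
  · rw [Equiv.swap_apply_of_ne_of_ne hxa hxb] at h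
    exact absurd h hxy

/-- The key combinatorial lemma about four transpositions. -/
lemma key_lemma {α : Type*} [DecidableEq α] {p v q a3 b3 a4 b4 : α}
    (hpv : p ≠ v) (hvq : v ≠ q) (hpq : p ≠ q) (h3 : a3 ≠ b3)
    (heq : ∀ x, Equiv.swap a3 b3 (Equiv.swap a4 b4 x) =
      Equiv.swap v q (Equiv.swap p v x))
    (hne : ¬((a3 = v ∧ b3 = q) ∨ (b3 = v ∧ a3 = q))) :
    ((a3 = p ∧ b3 = q) ∨ (b3 = p ∧ a3 = q)) ∨
      ((a4 = p ∧ b4 = q) ∨ (b4 = p ∧ a4 = q)) := by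
  have contra : Equiv.swap a4 b4 = Equiv.swap a3 b3 → False := by
    intro hsw
    have h6 := heq p
    rw [hsw, Equiv.swap_apply_self, Equiv.swap_apply_left, Equiv.swap_apply_left] at h6
    exact hpq h6
  have hmema : a3 = p ∨ a3 = v ∨ a3 = q := by
    by_contra hcon
    push_neg at hcon
    obtain ⟨h1, h2, h3'⟩ := hcon
    have h4 := heq a3
    rw [Equiv.swap_apply_of_ne_of_ne h1 h2, Equiv.swap_apply_of_ne_of_ne h2 h3'] at h4
    have h5 : Equiv.swap a4 b4 a3 = b3 := by
      have h7 := congrArg (Equiv.swap a3 b3) h4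
      rwa [Equiv.swap_apply_self, Equiv.swap_apply_left] at h7
    rcases swap_apply_cases h5 h3 with ⟨rfl, rfl⟩ | ⟨rfl, rfl⟩
    · exact contra rfl
    · exact contra (Equiv.swap_comm _ _)
  have hmemb : b3 = p ∨ b3 = v ∨ b3 = q := by
    by_contra hcon
    push_neg at hcon
    obtain ⟨h1, h2, h3'⟩ := hcon
    have h4 := heq b3
    rw [Equiv.swap_apply_of_ne_of_ne h1 h2, Equiv.swap_apply_of_ne_of_ne h2 h3'] at h4
    have h5 : Equiv.swap a4 b4 b3 = a3 := by
      have h7 := congrArg (Equiv.swap a3 b3) h4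
      rwa [Equiv.swap_apply_self, Equiv.swap_apply_right] at h7
    rcases swap_apply_cases h5 h3.symm with ⟨rfl, rfl⟩ | ⟨rfl, rfl⟩
    · exact contra (Equiv.swap_comm _ _)
    · exact contra rfl
  -- the case where `swap a3 b3 = swap p v` : compute the other pair
  have hcase_pv : Equiv.swap a3 b3 = Equiv.swap p v →
      (a4 = p ∧ b4 = q) ∨ (b4 = p ∧ a4 = q) := by
    intro hsw
    have h6 := heq q
    rw [Equiv.swap_apply_of_ne_of_ne hpq.symm hvq.symm, Equiv.swap_apply_right, hsw] at h6
    have h7 : Equiv.swap a4 b4 q = p := by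
      have h8 := congrArg (Equiv.swap p v) h6
      rwa [Equiv.swap_apply_self, Equiv.swap_apply_right] at h8
    rcases swap_apply_cases h7 hpq.symm with ⟨h8, h9⟩ | ⟨h8, h9⟩
    · exact Or.inr ⟨h9, h8⟩
    · exact Or.inl ⟨h9, h8⟩
  rcases hmema with rfl | rfl | rfl
  · rcases hmemb with rfl | hb | rfl
    · exact absurd rfl h3
    · subst hb
      exact Or.inr (hcase_pv rfl)
    · exact Or.inl (Or.inl ⟨rfl, rfl⟩)
  · rcases hmemb with hb | rfl | hb
    · subst hb
      exact Or.inr (hcase_pv (Equiv.swap_comm _ _))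
    · exact absurd rfl h3
    · subst hb
      exact absurd (Or.inl ⟨rfl, rfl⟩) hne
  · rcases hmemb with rfl | rfl | rfl
    · exact Or.inl (Or.inr ⟨rfl, rfl⟩)
    · exact absurd (Or.inr ⟨rfl, rfl⟩) hne
    · exact absurd rfl h3

lemma trans_swap_apply [DecidableEq V] [DecidableEq W] (σ : V ≃ W) (a b x : V) :
    σ (Equiv.swap a b x) = Equiv.swap (σ a) (σ b) (σ x) := by
  rcases eq_or_ne x a with rfl | hxa
  · simp
  rcases eq_or_ne x b with rfl | hxb
  · simp
  · rw [Equiv.swap_apply_of_ne_of_ne hxa hxb,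
      Equiv.swap_apply_of_ne_of_ne (σ.injective.ne hxa) (σ.injective.ne hxb)]

lemma fs_adj_iff [DecidableEq V] {X : SimpleGraph V} {Y : SimpleGraph W} {σ τ : V ≃ W} :
    (FS X Y).Adj σ τ ↔
      ∃ a b, X.Adj a b ∧ Y.Adj (σ a) (σ b) ∧ τ = (Equiv.swap a b).trans σ := by
  constructor
  · rintro ⟨a, b, hX, hY, h1, h2, h3⟩
    refine ⟨a, b, hX, hY, Equiv.ext fun x => ?_⟩
    rcases eq_or_ne x a with rfl | hxa
    · simpa using h1
    rcases eq_or_ne x b with rfl | hxb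
    · simpa using h2
    · rw [h3 x hxa hxb]
      simp [Equiv.swap_apply_of_ne_of_ne hxa hxb]
  · rintro ⟨a, b, hX, hY, rfl⟩
    exact ⟨a, b, hX, hY, by simp, by simp,
      fun c hca hcb => by simp [Equiv.swap_apply_of_ne_of_ne hca hcb]⟩

lemma fs_walk_parity [DecidableEq V] [Fintype V] {X : SimpleGraph V} {Y : SimpleGraph W}
    {σ τ : V ≃ W} (w : (FS X Y).Walk σ τ) :
    ∃ π : Equiv.Perm V, τ = π.trans σ ∧ Equiv.Perm.sign π = (-1) ^ w.length := by
  induction w with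
  | nil => exact ⟨1, by ext x; rfl, by simp⟩
  | cons h p ih =>
    obtain ⟨π, hπ, hsign⟩ := ih
    obtain ⟨a, b, hX, hY, hρ⟩ := fs_adj_iff.mp h
    refine ⟨π.trans (Equiv.swap a b), ?_, ?_⟩
    · rw [hπ, hρ]
      ext x
      rfl
    · have : π.trans (Equiv.swap a b) = Equiv.swap a b * π := rfl
      rw [this, Equiv.Perm.sign_mul, Equiv.Perm.sign_swap hX.ne, hsign,
        SimpleGraph.Walk.length_cons, pow_succ]
      exact mul_comm _ _

lemma fs_closed_even [DecidableEq V] [Fintype V] {X : SimpleGraph V} {Y : SimpleGraph W}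
    {σ : V ≃ W} (w : (FS X Y).Walk σ σ) : Even w.length := by
  obtain ⟨π, hπ, hsign⟩ := fs_walk_parity w
  have hπ1 : π = 1 := by
    ext x
    have h1 : σ x = σ (π x) := by
      conv_lhs => rw [hπ]
      rfl
    simpa using (σ.injective h1).symm
  rw [hπ1, map_one] at hsign
  have hne : (-1 : ℤˣ) ≠ 1 := by decide
  exact (neg_one_pow_eq_one_iff_even hne).mp hsign.symm

lemma exists_perm_list {α : Type*} [DecidableEq α] :
    ∀ l : List (α × α), (l.map Prod.fst).Nodup → (l.map Prod.snd).Nodup →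
      ∃ π : Equiv.Perm α, ∀ p ∈ l, π p.1 = p.2 := by
  intro l
  induction l with
  | nil => exact fun _ _ => ⟨1, by simp⟩
  | cons hd tl ih =>
    intro h1 h2
    rw [List.map_cons, List.nodup_cons] at h1 h2
    obtain ⟨π, hπ⟩ := ih h1.2 h2.2
    refine ⟨Equiv.swap hd.2 (π hd.1) * π, ?_⟩
    rintro p hp
    rcases List.mem_cons.mp hp with rfl | hp
    · simp [Equiv.Perm.mul_apply]
    · have hne1 : p.2 ≠ hd.2 := by
        intro hcon
        exact h2.1 (hcon ▸ List.mem_map_of_mem (f := Prod.snd) hp)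
      have hne2 : p.1 ≠ hd.1 := by
        intro hcon
        exact h1.1 (hcon ▸ List.mem_map_of_mem (f := Prod.fst) hp)
      have hval : π p.1 = p.2 := hπ p hp
      rw [Equiv.Perm.mul_apply, hval,
        Equiv.swap_apply_of_ne_of_ne hne1 (hval ▸ π.injective.ne hne2)]

lemma swap_swap_comm {α : Type*} [DecidableEq α] {a b c d : α}
    (hac : a ≠ c) (had : a ≠ d) (hbc : b ≠ c) (hbd : b ≠ d) (s : α) :
    Equiv.swap a b (Equiv.swap c d s) = Equiv.swap c d (Equiv.swap a b s) := by
  rcases eq_or_ne s c with rfl | h1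
  · rw [Equiv.swap_apply_left, Equiv.swap_apply_of_ne_of_ne had.symm hbd.symm,
      Equiv.swap_apply_of_ne_of_ne hac.symm hbc.symm, Equiv.swap_apply_left]
  rcases eq_or_ne s d with rfl | h2
  · rw [Equiv.swap_apply_right, Equiv.swap_apply_of_ne_of_ne hac.symm hbc.symm,
      Equiv.swap_apply_of_ne_of_ne had.symm hbd.symm, Equiv.swap_apply_right]
  · rw [Equiv.swap_apply_of_ne_of_ne h1 h2]
    rcases eq_or_ne s a with rfl | h3
    · rw [Equiv.swap_apply_left, Equiv.swap_apply_of_ne_of_ne hbc hbd]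
    rcases eq_or_ne s b with rfl | h4
    · rw [Equiv.swap_apply_right, Equiv.swap_apply_of_ne_of_ne hac had]
    · rw [Equiv.swap_apply_of_ne_of_ne h3 h4, Equiv.swap_apply_of_ne_of_ne h1 h2]

lemma triangle_swap_id {α : Type*} [DecidableEq α] {a b c : α}
    (hab : a ≠ b) (hbc : b ≠ c) (hac : a ≠ c) (t : α) :
    Equiv.swap a b (Equiv.swap b c (Equiv.swap c a (Equiv.swap b c t))) = t := by
  simp only [Equiv.swap_apply_def]
  split_ifs <;> simp_all

lemma egirth_le_four {A : Type*} {G : SimpleGraph A} {v0 v1 v2 v3 : A}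
    (h01 : G.Adj v0 v1) (h12 : G.Adj v1 v2) (h23 : G.Adj v2 v3) (h30 : G.Adj v3 v0)
    (h02 : v0 ≠ v2) (h13 : v1 ≠ v3) : G.egirth ≤ 4 := by
  have hcyc : (SimpleGraph.Walk.cons h01 (.cons h12 (.cons h23 (.cons h30 .nil)))).IsCycle := by
    have n01 := h01.ne
    have n12 := h12.ne
    have n23 := h23.ne
    have n30 := h30.ne
    have n10 := h01.ne'
    have n21 := h12.ne'
    have n32 := h23.ne'
    have n03 := h30.ne'
    have h20 := h02.symm
    have h31 := h13.symm
    rw [SimpleGraph.Walk.isCycle_def]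
    refine ⟨?_, by simp, ?_⟩
    · rw [SimpleGraph.Walk.isTrail_def]
      simp only [SimpleGraph.Walk.edges_cons, SimpleGraph.Walk.edges_nil,
        List.nodup_cons, List.mem_cons, List.not_mem_nil, or_false, List.mem_singleton,
        List.nodup_nil, and_true, Sym2.eq, Sym2.rel_iff', Prod.mk.injEq, Prod.swap_prod_mk]
      refine ⟨?_, ?_, ?_⟩ <;> tauto
    · simp only [SimpleGraph.Walk.support_cons, SimpleGraph.Walk.support_nil,
        List.tail_cons, List.nodup_cons, List.mem_cons, List.not_mem_nil, or_false,
        List.mem_singleton, List.nodup_nil, and_true]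
      refine ⟨?_, ?_, ?_⟩ <;> tauto
  have hle : G.egirth ≤ ((SimpleGraph.Walk.cons h01
      (.cons h12 (.cons h23 (.cons h30 .nil)))).length : ℕ∞) := by
    rw [SimpleGraph.egirth]
    exact iInf_le_of_le v0 (iInf_le_of_le _ (iInf_le_of_le hcyc le_rfl))
  simpa using hle

end Aux

/-- The girth of `FS(X, Y)` is `4` iff either both `X` and `Y` contain two vertex-disjoint
edges, or both contain a triangle. -/
theorem stmt8 {V W : Type} [Fintype V] [Fintype W] (n : ℕ)
    (hV : Fintype.card V = n) (hW : Fintype.card W = n)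
    (X : SimpleGraph V) (Y : SimpleGraph W) :
    (FS X Y).egirth = 4 ↔
      ((∃ a b c d : V, X.Adj a b ∧ X.Adj c d ∧ a ≠ c ∧ a ≠ d ∧ b ≠ c ∧ b ≠ d) ∧
          (∃ a b c d : W, Y.Adj a b ∧ Y.Adj c d ∧ a ≠ c ∧ a ≠ d ∧ b ≠ c ∧ b ≠ d)) ∨
        ((∃ a b c : V, X.Adj a b ∧ X.Adj b c ∧ X.Adj a c) ∧
          (∃ a b c : W, Y.Adj a b ∧ Y.Adj b c ∧ Y.Adj a c)) := by
  classical
  constructor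
  · intro hg
    have hnac : ¬ (FS X Y).IsAcyclic := by
      intro h
      rw [← SimpleGraph.egirth_eq_top] at h
      rw [h] at hg
      exact (by decide : (⊤ : ℕ∞) ≠ 4) hg
    obtain ⟨σ0, w, hw, hlen⟩ := SimpleGraph.exists_egirth_eq_length.mpr hnac
    rw [hg] at hlen
    have hlen4 : w.length = 4 := by exact_mod_cast hlen.symm
    clear hlen hg hnac
    cases w with
    | nil => simp at hlen4
    | cons h01 w1 =>
    rename_i σ1
    cases w1 with
    | nil => simp at hlen4
    | cons h12 w2 =>
    rename_i σ2
    cases w2 with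
    | nil => simp at hlen4
    | cons h23 w3 =>
    rename_i σ3
    cases w3 with
    | nil => simp at hlen4
    | cons h30 w4 =>
    rename_i σ4
    cases w4 with
    | cons h45 w5 =>
      simp only [SimpleGraph.Walk.length_cons] at hlen4
      omega
    | nil =>
    have hnd := hw.support_nodup
    simp only [SimpleGraph.Walk.support_cons, SimpleGraph.Walk.support_nil,
      List.tail_cons, List.nodup_cons, List.mem_cons, List.mem_singleton,
      List.not_mem_nil, or_false, List.nodup_nil, and_true] at hnd
    push_neg at hnd
    obtain ⟨⟨hn12, hn13, hn10⟩, ⟨hn23, hn20⟩, hn30⟩ := hnd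
    have h02 : σ0 ≠ σ2 := hn20.symm
    have h13 : σ1 ≠ σ3 := hn13
    obtain ⟨a1, b1, hX1, hY1, hσ1⟩ := fs_adj_iff.mp h01
    obtain ⟨a2, b2, hX2, hY2, hσ2⟩ := fs_adj_iff.mp h12
    obtain ⟨a3, b3, hX3, hY3, hσ3⟩ := fs_adj_iff.mp h23
    obtain ⟨a4, b4, hX4, hY4, hσ4⟩ := fs_adj_iff.mp h30
    have e1 : ∀ t, σ1 t = σ0 (Equiv.swap a1 b1 t) := fun t => by rw [hσ1]; rfl
    have e2 : ∀ t, σ2 t = σ1 (Equiv.swap a2 b2 t) := fun t => by rw [hσ2]; rfl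
    have e3 : ∀ t, σ3 t = σ2 (Equiv.swap a3 b3 t) := fun t => by rw [hσ3]; rfl
    have e4 : ∀ t, σ0 t = σ3 (Equiv.swap a4 b4 t) := fun t => by rw [hσ4]; rfl
    have hid : ∀ t, Equiv.swap a1 b1 (Equiv.swap a2 b2
        (Equiv.swap a3 b3 (Equiv.swap a4 b4 t))) = t := by
      intro t
      apply σ0.injective
      rw [← e1, ← e2, ← e3]
      exact (e4 t).symm
    have hschain : ∀ t, Equiv.swap a3 b3 (Equiv.swap a4 b4 t) =
        Equiv.swap a2 b2 (Equiv.swap a1 b1 t) := by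
      intro t
      have h5 := congrArg (Equiv.swap a1 b1) (hid t)
      rw [Equiv.swap_apply_self] at h5
      have h6 := congrArg (Equiv.swap a2 b2) h5
      rwa [Equiv.swap_apply_self] at h6
    have ew1 : ∀ t, σ1 t = Equiv.swap (σ0 a1) (σ0 b1) (σ0 t) :=
      fun t => (e1 t).trans (trans_swap_apply σ0 a1 b1 t)
    have ew2 : ∀ t, σ2 t = Equiv.swap (σ1 a2) (σ1 b2) (σ1 t) :=
      fun t => (e2 t).trans (trans_swap_apply σ1 a2 b2 t)
    have ew3 : ∀ t, σ3 t = Equiv.swap (σ2 a3) (σ2 b3) (σ2 t) :=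
      fun t => (e3 t).trans (trans_swap_apply σ2 a3 b3 t)
    have ew4 : ∀ t, σ0 t = Equiv.swap (σ3 a4) (σ3 b4) (σ3 t) :=
      fun t => (e4 t).trans (trans_swap_apply σ3 a4 b4 t)
    have hidW : ∀ y, Equiv.swap (σ3 a4) (σ3 b4) (Equiv.swap (σ2 a3) (σ2 b3)
        (Equiv.swap (σ1 a2) (σ1 b2) (Equiv.swap (σ0 a1) (σ0 b1) y))) = y := by
      intro y
      obtain ⟨t, rfl⟩ := σ0.surjective y
      rw [← ew1, ← ew2, ← ew3]
      exact (ew4 t).symm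
    have hschainW : ∀ y, Equiv.swap (σ2 a3) (σ2 b3) (Equiv.swap (σ3 a4) (σ3 b4) y) =
        Equiv.swap (σ1 a2) (σ1 b2) (Equiv.swap (σ0 a1) (σ0 b1) y) := by
      intro y
      have h5 := congrArg (Equiv.swap (σ3 a4) (σ3 b4)) (hidW y)
      rw [Equiv.swap_apply_self] at h5
      have h6 := congrArg (Equiv.swap (σ2 a3) (σ2 b3)) h5
      rw [Equiv.swap_apply_self] at h6
      exact h6.symm
    have hs12 : Equiv.swap a1 b1 ≠ Equiv.swap a2 b2 := by
      intro hss
      apply h02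
      ext t
      rw [e2, e1, ← hss, Equiv.swap_apply_self]
    have hs23 : Equiv.swap a2 b2 ≠ Equiv.swap a3 b3 := by
      intro hss
      apply h13
      ext t
      rw [e3, e2, ← hss, Equiv.swap_apply_self]
    have hws23 : Equiv.swap (σ1 a2) (σ1 b2) ≠ Equiv.swap (σ2 a3) (σ2 b3) := by
      intro hss
      apply h13
      ext t
      rw [ew3, ← hss, ew2, Equiv.swap_apply_self]
    by_cases hshare : a2 = a1 ∨ a2 = b1 ∨ b2 = a1 ∨ b2 = b1
    · -- shared vertex: triangles in both graphs
      obtain ⟨p, v, q, hpv, hvq, hpq, hpair1, hpair2⟩ :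
          ∃ p v q : V, p ≠ v ∧ v ≠ q ∧ p ≠ q ∧
            ((a1 = p ∧ b1 = v) ∨ (a1 = v ∧ b1 = p)) ∧
            ((a2 = v ∧ b2 = q) ∨ (a2 = q ∧ b2 = v)) := by
        have hab1 := hX1.ne
        have hab2 := hX2.ne
        rcases hshare with h | h | h | h
        · subst h
          exact ⟨b1, a2, b2, hab1.symm, hab2, fun hh => hs12 (by rw [hh]),
            Or.inr ⟨rfl, rfl⟩, Or.inl ⟨rfl, rfl⟩⟩
        · subst h
          exact ⟨a1, a2, b2, hab1, hab2, fun hh => hs12 (by rw [← hh, Equiv.swap_comm]),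
            Or.inl ⟨rfl, rfl⟩, Or.inl ⟨rfl, rfl⟩⟩
        · subst h
          exact ⟨b1, b2, a2, hab1.symm, fun hh => hab2 hh.symm,
            fun hh => hs12 (by rw [← hh, Equiv.swap_comm]),
            Or.inr ⟨rfl, rfl⟩, Or.inr ⟨rfl, rfl⟩⟩
        · subst h
          exact ⟨a1, b2, a2, hab1, fun hh => hab2 hh.symm, fun hh => hs12 (by rw [hh]),
            Or.inl ⟨rfl, rfl⟩, Or.inr ⟨rfl, rfl⟩⟩
      have hsw1 : Equiv.swap a1 b1 = Equiv.swap p v := by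
        rcases hpair1 with ⟨rfl, rfl⟩ | ⟨rfl, rfl⟩
        · rfl
        · exact Equiv.swap_comm _ _
      have hsw2 : Equiv.swap a2 b2 = Equiv.swap v q := by
        rcases hpair2 with ⟨rfl, rfl⟩ | ⟨rfl, rfl⟩
        · rfl
        · exact Equiv.swap_comm _ _
      have hXpv : X.Adj p v := by
        rcases hpair1 with ⟨rfl, rfl⟩ | ⟨rfl, rfl⟩
        · exact hX1
        · exact hX1.symm
      have hXvq : X.Adj v q := by
        rcases hpair2 with ⟨rfl, rfl⟩ | ⟨rfl, rfl⟩
        · exact hX2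
        · exact hX2.symm
      have heq : ∀ t, Equiv.swap a3 b3 (Equiv.swap a4 b4 t) =
          Equiv.swap v q (Equiv.swap p v t) := by
        intro t
        rw [hschain, hsw1, hsw2]
      have hne : ¬((a3 = v ∧ b3 = q) ∨ (b3 = v ∧ a3 = q)) := by
        rintro (⟨rfl, rfl⟩ | ⟨rfl, rfl⟩)
        · exact hs23 (by rw [hsw2])
        · exact hs23 (by rw [hsw2, Equiv.swap_comm])
      have hkey := key_lemma hpv hvq hpq hX3.ne heq hne
      have hXpq : X.Adj p q := by
        rcases hkey with (⟨h5, h6⟩ | ⟨h5, h6⟩) | (⟨h5, h6⟩ | ⟨h5, h6⟩)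
        · rw [← h5, ← h6]; exact hX3
        · rw [← h6, ← h5]; exact hX3.symm
        · rw [← h5, ← h6]; exact hX4
        · rw [← h6, ← h5]; exact hX4.symm
      have hσ1v : σ1 v = σ0 p := by rw [e1, hsw1, Equiv.swap_apply_right]
      have hσ1q : σ1 q = σ0 q := by
        rw [e1, hsw1, Equiv.swap_apply_of_ne_of_ne hpq.symm hvq.symm]
      have hw1 : Equiv.swap (σ0 a1) (σ0 b1) = Equiv.swap (σ0 p) (σ0 v) := by
        rcases hpair1 with ⟨rfl, rfl⟩ | ⟨rfl, rfl⟩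
        · rfl
        · exact Equiv.swap_comm _ _
      have hw2 : Equiv.swap (σ1 a2) (σ1 b2) = Equiv.swap (σ0 p) (σ0 q) := by
        rcases hpair2 with ⟨rfl, rfl⟩ | ⟨rfl, rfl⟩
        · rw [hσ1v, hσ1q]
        · rw [hσ1v, hσ1q]; exact Equiv.swap_comm _ _
      have heqW : ∀ y, Equiv.swap (σ2 a3) (σ2 b3) (Equiv.swap (σ3 a4) (σ3 b4) y) =
          Equiv.swap (σ0 p) (σ0 q) (Equiv.swap (σ0 v) (σ0 p) y) := by
        intro y
        rw [hschainW, hw2, hw1, Equiv.swap_comm (σ0 p) (σ0 v)]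
      have hneW : ¬((σ2 a3 = σ0 p ∧ σ2 b3 = σ0 q) ∨ (σ2 b3 = σ0 p ∧ σ2 a3 = σ0 q)) := by
        rintro (⟨h5, h6⟩ | ⟨h5, h6⟩)
        · exact hws23 (by rw [hw2, ← h5, ← h6])
        · exact hws23 (by rw [hw2, ← h5, ← h6, Equiv.swap_comm])
      have hkeyW := key_lemma (σ0.injective.ne hpv.symm) (σ0.injective.ne hpq)
        (σ0.injective.ne hvq) (σ2.injective.ne hX3.ne) heqW hneW
      have hYvq : Y.Adj (σ0 v) (σ0 q) := by
        rcases hkeyW with (⟨h5, h6⟩ | ⟨h5, h6⟩) | (⟨h5, h6⟩ | ⟨h5, h6⟩)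
        · rw [← h5, ← h6]; exact hY3
        · rw [← h6, ← h5]; exact hY3.symm
        · rw [← h5, ← h6]; exact hY4
        · rw [← h6, ← h5]; exact hY4.symm
      have hYpv : Y.Adj (σ0 p) (σ0 v) := by
        rcases hpair1 with ⟨rfl, rfl⟩ | ⟨rfl, rfl⟩
        · exact hY1
        · exact hY1.symm
      have hYpq : Y.Adj (σ0 p) (σ0 q) := by
        rcases hpair2 with ⟨rfl, rfl⟩ | ⟨rfl, rfl⟩
        · rw [← hσ1v, ← hσ1q]; exact hY2
        · rw [← hσ1v, ← hσ1q]; exact hY2.symm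
      exact Or.inr ⟨⟨p, v, q, hXpv, hXvq, hXpq⟩, ⟨σ0 p, σ0 v, σ0 q, hYpv, hYvq, hYpq⟩⟩
    · -- disjoint edges
      push_neg at hshare
      obtain ⟨h21, h22, h23', h24⟩ := hshare
      have hv2a : σ1 a2 = σ0 a2 := by rw [e1, Equiv.swap_apply_of_ne_of_ne h21 h22]
      have hv2b : σ1 b2 = σ0 b2 := by rw [e1, Equiv.swap_apply_of_ne_of_ne h23' h24]
      rw [hv2a, hv2b] at hY2
      exact Or.inl ⟨⟨a1, b1, a2, b2, hX1, hX2, h21.symm, h23'.symm, h22.symm, h24.symm⟩,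
        ⟨σ0 a1, σ0 b1, σ0 a2, σ0 b2, hY1, hY2, σ0.injective.ne h21.symm,
          σ0.injective.ne h23'.symm, σ0.injective.ne h22.symm, σ0.injective.ne h24.symm⟩⟩
  · rintro h
    have h4le : 4 ≤ (FS X Y).egirth := by
      rw [SimpleGraph.le_egirth]
      intro σ w hw
      have h3 := hw.three_le_length
      have heven := fs_closed_even w
      obtain ⟨k, hk⟩ := heven
      have h4 : 4 ≤ w.length := by omega
      exact_mod_cast h4
    have e : V ≃ W := Fintype.equivOfCardEq (hV.trans hW.symm)
    have hle : (FS X Y).egirth ≤ 4 := by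
      rcases h with ⟨⟨a, b, c, d, hXab, hXcd, hac, had, hbc, hbd⟩,
          ⟨x, y, z, u, hYxy, hYzu, hxz, hxu, hyz, hyu⟩⟩ |
          ⟨⟨a, b, c, hXab, hXbc, hXac⟩, ⟨x, y, z, hYxy, hYyz, hYxz⟩⟩
      · obtain ⟨π, hπ⟩ := exists_perm_list [(e a, x), (e b, y), (e c, z), (e d, u)]
          (by
            simp only [List.map_cons, List.map_nil, List.nodup_cons, List.mem_cons,
              List.not_mem_nil, or_false, List.mem_singleton, List.nodup_nil, and_true,
              e.injective.eq_iff]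
            push_neg
            exact ⟨⟨hXab.ne, hac, had⟩, ⟨hbc, hbd⟩, hXcd.ne, trivial⟩)
          (by
            simp only [List.map_cons, List.map_nil, List.nodup_cons, List.mem_cons,
              List.not_mem_nil, or_false, List.mem_singleton, List.nodup_nil, and_true]
            push_neg
            exact ⟨⟨hYxy.ne, hxz, hxu⟩, ⟨hyz, hyu⟩, hYzu.ne, trivial⟩)
        set σ0 : V ≃ W := e.trans π with hσ0
        have hva : σ0 a = x := hπ (e a, x) (by simp)
        have hvb : σ0 b = y := hπ (e b, y) (by simp)
        have hvc : σ0 c = z := hπ (e c, z) (by simp)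
        have hvd : σ0 d = u := hπ (e d, u) (by simp)
        set σ1 : V ≃ W := (Equiv.swap a b).trans σ0 with hσ1
        set σ2 : V ≃ W := (Equiv.swap c d).trans σ1 with hσ2
        set σ3 : V ≃ W := (Equiv.swap a b).trans σ2 with hσ3
        have hv1a : σ1 a = y := by rw [hσ1, Equiv.trans_apply, Equiv.swap_apply_left, hvb]
        have hv1b : σ1 b = x := by rw [hσ1, Equiv.trans_apply, Equiv.swap_apply_right, hva]
        have hv1c : σ1 c = z := by
          rw [hσ1, Equiv.trans_apply, Equiv.swap_apply_of_ne_of_ne hac.symm hbc.symm, hvc]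
        have hv1d : σ1 d = u := by
          rw [hσ1, Equiv.trans_apply, Equiv.swap_apply_of_ne_of_ne had.symm hbd.symm, hvd]
        have hv2a : σ2 a = y := by
          rw [hσ2, Equiv.trans_apply, Equiv.swap_apply_of_ne_of_ne hac had, hv1a]
        have hv2b : σ2 b = x := by
          rw [hσ2, Equiv.trans_apply, Equiv.swap_apply_of_ne_of_ne hbc hbd, hv1b]
        have hv2c : σ2 c = u := by rw [hσ2, Equiv.trans_apply, Equiv.swap_apply_left, hv1d]
        have hv2d : σ2 d = z := by rw [hσ2, Equiv.trans_apply, Equiv.swap_apply_right, hv1c]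
        have hv3a : σ3 a = x := by rw [hσ3, Equiv.trans_apply, Equiv.swap_apply_left, hv2b]
        have hv3c : σ3 c = u := by
          rw [hσ3, Equiv.trans_apply, Equiv.swap_apply_of_ne_of_ne hac.symm hbc.symm, hv2c]
        have hv3d : σ3 d = z := by
          rw [hσ3, Equiv.trans_apply, Equiv.swap_apply_of_ne_of_ne had.symm hbd.symm, hv2d]
        have h01 : (FS X Y).Adj σ0 σ1 :=
          fs_adj_iff.mpr ⟨a, b, hXab, by rw [hva, hvb]; exact hYxy, hσ1⟩
        have h12 : (FS X Y).Adj σ1 σ2 :=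
          fs_adj_iff.mpr ⟨c, d, hXcd, by rw [hv1c, hv1d]; exact hYzu, hσ2⟩
        have h23 : (FS X Y).Adj σ2 σ3 :=
          fs_adj_iff.mpr ⟨a, b, hXab, by rw [hv2a, hv2b]; exact hYxy.symm, hσ3⟩
        have hclose : σ0 = (Equiv.swap c d).trans σ3 := by
          ext t
          rw [Equiv.trans_apply, hσ3, hσ2, hσ1]
          simp only [Equiv.trans_apply]
          rw [swap_swap_comm hac had hbc hbd (Equiv.swap a b (Equiv.swap c d t)),
            Equiv.swap_apply_self, Equiv.swap_apply_self]
          rfl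
        have h30 : (FS X Y).Adj σ3 σ0 :=
          fs_adj_iff.mpr ⟨c, d, hXcd, by rw [hv3c, hv3d]; exact hYzu.symm, hclose⟩
        have hne02 : σ0 ≠ σ2 := by
          intro hcon
          have hh : σ0 a = σ2 a := by rw [hcon]
          rw [hva, hv2a] at hh
          exact hYxy.ne hh
        have hne13 : σ1 ≠ σ3 := by
          intro hcon
          have hh : σ1 a = σ3 a := by rw [hcon]
          rw [hv1a, hv3a] at hh
          exact hYxy.ne hh.symm
        exact egirth_le_four h01 h12 h23 h30 hne02 hne13
      · obtain ⟨π, hπ⟩ := exists_perm_list [(e a, x), (e b, y), (e c, z)]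
          (by
            simp only [List.map_cons, List.map_nil, List.nodup_cons, List.mem_cons,
              List.not_mem_nil, or_false, List.mem_singleton, List.nodup_nil, and_true,
              e.injective.eq_iff]
            push_neg
            exact ⟨⟨hXab.ne, hXac.ne⟩, hXbc.ne, trivial⟩)
          (by
            simp only [List.map_cons, List.map_nil, List.nodup_cons, List.mem_cons,
              List.not_mem_nil, or_false, List.mem_singleton, List.nodup_nil, and_true]
            push_neg
            exact ⟨⟨hYxy.ne, hYxz.ne⟩, hYyz.ne, trivial⟩)
        set σ0 : V ≃ W := e.trans π with hσ0
        have hva : σ0 a = x := hπ (e a, x) (by simp)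
        have hvb : σ0 b = y := hπ (e b, y) (by simp)
        have hvc : σ0 c = z := hπ (e c, z) (by simp)
        have hab := hXab.ne
        have hbc := hXbc.ne
        have hac := hXac.ne
        set σ1 : V ≃ W := (Equiv.swap a b).trans σ0 with hσ1
        set σ2 : V ≃ W := (Equiv.swap b c).trans σ1 with hσ2
        set σ3 : V ≃ W := (Equiv.swap c a).trans σ2 with hσ3
        have hv1a : σ1 a = y := by rw [hσ1, Equiv.trans_apply, Equiv.swap_apply_left, hvb]
        have hv1b : σ1 b = x := by rw [hσ1, Equiv.trans_apply, Equiv.swap_apply_right, hva]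
        have hv1c : σ1 c = z := by
          rw [hσ1, Equiv.trans_apply, Equiv.swap_apply_of_ne_of_ne hac.symm hbc.symm, hvc]
        have hv2a : σ2 a = y := by
          rw [hσ2, Equiv.trans_apply, Equiv.swap_apply_of_ne_of_ne hab hac, hv1a]
        have hv2b : σ2 b = z := by rw [hσ2, Equiv.trans_apply, Equiv.swap_apply_left, hv1c]
        have hv2c : σ2 c = x := by rw [hσ2, Equiv.trans_apply, Equiv.swap_apply_right, hv1b]
        have hv3a : σ3 a = x := by rw [hσ3, Equiv.trans_apply, Equiv.swap_apply_right, hv2c]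
        have hv3b : σ3 b = z := by
          rw [hσ3, Equiv.trans_apply, Equiv.swap_apply_of_ne_of_ne hbc hab.symm, hv2b]
        have hv3c : σ3 c = y := by rw [hσ3, Equiv.trans_apply, Equiv.swap_apply_left, hv2a]
        have h01 : (FS X Y).Adj σ0 σ1 :=
          fs_adj_iff.mpr ⟨a, b, hXab, by rw [hva, hvb]; exact hYxy, hσ1⟩
        have h12 : (FS X Y).Adj σ1 σ2 :=
          fs_adj_iff.mpr ⟨b, c, hXbc, by rw [hv1b, hv1c]; exact hYxz, hσ2⟩
        have h23 : (FS X Y).Adj σ2 σ3 :=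
          fs_adj_iff.mpr ⟨c, a, hXac.symm, by rw [hv2c, hv2a]; exact hYxy, hσ3⟩
        have hclose : σ0 = (Equiv.swap b c).trans σ3 := by
          ext t
          rw [Equiv.trans_apply, hσ3, hσ2, hσ1]
          simp only [Equiv.trans_apply]
          rw [triangle_swap_id hab hbc hac t]
          rfl
        have h30 : (FS X Y).Adj σ3 σ0 :=
          fs_adj_iff.mpr ⟨b, c, hXbc, by rw [hv3b, hv3c]; exact hYyz.symm, hclose⟩
        have hne02 : σ0 ≠ σ2 := by
          intro hcon
          have hh : σ0 a = σ2 a := by rw [hcon]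
          rw [hva, hv2a] at hh
          exact hYxy.ne hh
        have hne13 : σ1 ≠ σ3 := by
          intro hcon
          have hh : σ1 a = σ3 a := by rw [hcon]
          rw [hv1a, hv3a] at hh
          exact hYxy.ne hh.symm
        exact egirth_le_four h01 h12 h23 h30 hne02 hne13
    exact le_antisymm hle h4le
end

section
/- For n ≥ 3, every connected component of FS(Cycle_n, Star_n) is isomorphic to the cycle graph Cycle_{n(n−1)}; that is, for each connected component, the induced subgraph of FS(Cycle_n, Star_n) on the vertices of that component is isomorphic to Cycle_{n(n−1)}. -/
open SimpleGraph

/-- The star graph on `Fin n`: the vertex with value `n - 1` (playing the role of the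
vertex `n` of `{1, …, n}`) is adjacent to all other vertices, and there are no
other edges. -/
def starGraph (n : ℕ) : SimpleGraph (Fin n) where
  Adj a b := a ≠ b ∧ (a.val = n - 1 ∨ b.val = n - 1)
  symm := by constructor; rintro a b ⟨h1, h2⟩; exact ⟨h1.symm, h2.symm⟩
  loopless := by constructor; rintro a ⟨h, _⟩; exact h rfl

namespace FS10

lemma mod_inj {N b c : ℕ} (hb : b < N) (hc : c < N) (h : b % N = c % N) : b = c := by
  rwa [Nat.mod_eq_of_lt hb, Nat.mod_eq_of_lt hc] at h

lemma add_mod_cancel {N a b c : ℕ} (hb : b < N) (hc : c < N)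
    (h : (a + b) % N = (a + c) % N) : b = c := by
  have h2 : b ≡ c [MOD N] := Nat.ModEq.add_left_cancel' a h
  exact mod_inj hb hc h2

variable {n : ℕ}

def pos (hn : 3 ≤ n) (a : ℕ) : Fin n := ⟨a % n, Nat.mod_lt a (by omega)⟩

lemma pos_val (hn : 3 ≤ n) (a : ℕ) : (pos hn a).val = a % n := rfl

lemma eq_pos_iff (hn : 3 ≤ n) {x : Fin n} {a : ℕ} : x = pos hn a ↔ x.val = a % n := by
  simp [pos, Fin.ext_iff]

lemma pos_inj (hn : 3 ≤ n) {a b : ℕ} : pos hn a = pos hn b ↔ a % n = b % n := by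
  simp [pos, Fin.ext_iff]

lemma pos_add_n (hn : 3 ≤ n) (a : ℕ) : pos hn (a + n) = pos hn a := by
  rw [pos_inj hn, Nat.add_mod_right]

def ctr (hn : 3 ≤ n) : Fin n := ⟨n - 1, by omega⟩

variable (σ₀ : Fin n ≃ Fin n)

/-- base hole position -/
def q (hn : 3 ≤ n) : ℕ := (σ₀.symm (ctr hn)).val

lemma q_lt (hn : 3 ≤ n) : q σ₀ hn < n := (σ₀.symm (ctr hn)).isLt

/-- distance from hole(k)+1 to x, going clockwise -/
def dd (hn : 3 ≤ n) (k : ℕ) (x : Fin n) : ℕ :=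
  (x.val + n - (q σ₀ hn + k + 1) % n) % n

lemma dd_lt (hn : 3 ≤ n) (k : ℕ) (x : Fin n) : dd σ₀ hn k x < n :=
  Nat.mod_lt _ (by omega)

lemma dd_spec (hn : 3 ≤ n) (k : ℕ) (x : Fin n) :
    (q σ₀ hn + k + 1 + dd σ₀ hn k x) % n = x.val := by
  have hrn : (q σ₀ hn + k + 1) % n < n := Nat.mod_lt _ (by omega)
  simp only [dd]
  calc (q σ₀ hn + k + 1 + (x.val + n - (q σ₀ hn + k + 1) % n) % n) % n
      = ((q σ₀ hn + k + 1) % n + (x.val + n - (q σ₀ hn + k + 1) % n) % n % n) % n :=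
        Nat.add_mod _ _ _
    _ = ((q σ₀ hn + k + 1) % n % n + (x.val + n - (q σ₀ hn + k + 1) % n) % n) % n := by
        rw [Nat.mod_mod_of_dvd _ (dvd_refl n), Nat.mod_mod_of_dvd _ (dvd_refl n)]
    _ = ((q σ₀ hn + k + 1) % n + (x.val + n - (q σ₀ hn + k + 1) % n)) % n :=
        (Nat.add_mod _ _ _).symm
    _ = (x.val + n) % n := by
        rw [(by omega : (q σ₀ hn + k + 1) % n + (x.val + n - (q σ₀ hn + k + 1) % n)
          = x.val + n)]
    _ = x.val := by rw [Nat.add_mod_right, Nat.mod_eq_of_lt x.isLt]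

lemma dd_eq (hn : 3 ≤ n) (k : ℕ) (x : Fin n) {j : ℕ} (hj : j < n)
    (hx : x.val = (q σ₀ hn + k + 1 + j) % n) : dd σ₀ hn k x = j := by
  have h1 := dd_spec σ₀ hn k x
  rw [hx] at h1
  exact add_mod_cancel (dd_lt σ₀ hn k x) hj h1

lemma dd_lt' (hn : 3 ≤ n) (k : ℕ) (x : Fin n) (hx : x.val ≠ (q σ₀ hn + k) % n) :
    dd σ₀ hn k x < n - 1 := by
  rcases Nat.lt_or_ge (dd σ₀ hn k x) (n - 1) with h | h
  · exact h
  · exfalso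
    have h1 : dd σ₀ hn k x = n - 1 := by have := dd_lt σ₀ hn k x; omega
    have h2 := dd_spec σ₀ hn k x
    rw [h1] at h2
    have h3 : q σ₀ hn + k + 1 + (n - 1) = q σ₀ hn + k + n := by omega
    rw [h3, Nat.add_mod_right] at h2
    exact hx h2.symm

def F (hn : 3 ≤ n) (k : ℕ) (x : Fin n) : Fin n :=
  if x.val = (q σ₀ hn + k) % n then ctr hn
  else σ₀ (pos hn (q σ₀ hn + 1 + (k + dd σ₀ hn k x) % (n - 1)))

lemma F_hole (hn : 3 ≤ n) (k : ℕ) : F σ₀ hn k (pos hn (q σ₀ hn + k)) = ctr hn := by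
  simp [F, pos_val]

lemma F_eq_ctr_iff (hn : 3 ≤ n) (k : ℕ) (x : Fin n) :
    F σ₀ hn k x = ctr hn ↔ x.val = (q σ₀ hn + k) % n := by
  constructor
  · intro h
    by_contra hx
    rw [F, if_neg hx] at h
    set i := (k + dd σ₀ hn k x) % (n - 1) with hi
    have hilt : i < n - 1 := Nat.mod_lt _ (by omega)
    have h2 : pos hn (q σ₀ hn + 1 + i) = σ₀.symm (ctr hn) := by
      rw [← h]; simp
    have h3 : (q σ₀ hn + 1 + i) % n = q σ₀ hn % n := by
      have := congrArg Fin.val h2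
      rw [pos_val] at this
      rw [this, Nat.mod_eq_of_lt (q_lt σ₀ hn)]
      rfl
    have h4 : (q σ₀ hn + (1 + i)) % n = (q σ₀ hn + 0) % n := by
      rw [← Nat.add_assoc, Nat.add_zero]; exact h3
    have h5 : 1 + i = 0 := add_mod_cancel (by omega) (by omega) h4
    omega
  · intro h
    rw [F, if_pos h]

lemma F_nonhole (hn : 3 ≤ n) (k : ℕ) (x : Fin n) (hx : x.val ≠ (q σ₀ hn + k) % n) :
    F σ₀ hn k x = σ₀ (pos hn (q σ₀ hn + 1 + (k + dd σ₀ hn k x) % (n - 1))) := by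
  rw [F, if_neg hx]

lemma F_inj (hn : 3 ≤ n) (k : ℕ) : Function.Injective (F σ₀ hn k) := by
  intro x y h
  by_cases hx : x.val = (q σ₀ hn + k) % n
  · have h1 : F σ₀ hn k x = ctr hn := (F_eq_ctr_iff σ₀ hn k x).2 hx
    have h2 : F σ₀ hn k y = ctr hn := by rw [← h, h1]
    have hy := (F_eq_ctr_iff σ₀ hn k y).1 h2
    exact Fin.ext (hx.trans hy.symm)
  · by_cases hy : y.val = (q σ₀ hn + k) % n
    · have h2 : F σ₀ hn k y = ctr hn := (F_eq_ctr_iff σ₀ hn k y).2 hy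
      have h1 : F σ₀ hn k x = ctr hn := by rw [h, h2]
      exact absurd ((F_eq_ctr_iff σ₀ hn k x).1 h1) hx
    · rw [F_nonhole σ₀ hn k x hx, F_nonhole σ₀ hn k y hy] at h
      have h1 := σ₀.injective h
      rw [pos_inj] at h1
      have h2 : (k + dd σ₀ hn k x) % (n - 1) = (k + dd σ₀ hn k y) % (n - 1) :=
        add_mod_cancel (Nat.lt_of_lt_of_le (Nat.mod_lt _ (by omega)) (by omega))
          (Nat.lt_of_lt_of_le (Nat.mod_lt _ (by omega)) (by omega)) h1
      have h3 : dd σ₀ hn k x = dd σ₀ hn k y :=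
        add_mod_cancel (dd_lt' σ₀ hn k x hx) (dd_lt' σ₀ hn k y hy) h2
      have h4 := dd_spec σ₀ hn k x
      rw [h3, dd_spec σ₀ hn k y] at h4
      exact Fin.ext h4.symm

lemma succ_mod_ne (hn : 3 ≤ n) (a : ℕ) : (a + 1) % n ≠ a % n := by
  intro h
  have h2 : (a + 1) % n = (a + 0) % n := by rw [Nat.add_zero]; exact h
  have := add_mod_cancel (N := n) (by omega) (by omega) h2
  omega

lemma F_succ (hn : 3 ≤ n) (k : ℕ) :
    F σ₀ hn (k + 1) =
      F σ₀ hn k ∘ (Equiv.swap (pos hn (q σ₀ hn + k)) (pos hn (q σ₀ hn + k + 1))) := by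
  funext x
  have hab : pos hn (q σ₀ hn + k) ≠ pos hn (q σ₀ hn + k + 1) := by
    rw [Ne, pos_inj]
    intro h
    exact succ_mod_ne hn (q σ₀ hn + k) h.symm
  by_cases h1 : x = pos hn (q σ₀ hn + k + 1)
  · subst h1
    simp only [Function.comp_apply, Equiv.swap_apply_right]
    rw [F_hole]
    have : (pos hn (q σ₀ hn + k + 1)).val = (q σ₀ hn + (k + 1)) % n := by
      rw [pos_val, ← Nat.add_assoc]
    rw [F, if_pos this]
  · by_cases h0 : x = pos hn (q σ₀ hn + k)
    · subst h0
      simp only [Function.comp_apply, Equiv.swap_apply_left]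
      -- RHS : F k (pos (q+k+1))
      have hb : (pos hn (q σ₀ hn + k + 1)).val ≠ (q σ₀ hn + k) % n := by
        rw [pos_val]; exact succ_mod_ne hn _
      rw [F_nonhole σ₀ hn k _ hb]
      have hdb : dd σ₀ hn k (pos hn (q σ₀ hn + k + 1)) = 0 :=
        dd_eq σ₀ hn k _ (by omega) (by rw [pos_val, Nat.add_zero])
      rw [hdb]
      -- LHS : F (k+1) (pos (q+k))
      have ha : (pos hn (q σ₀ hn + k)).val ≠ (q σ₀ hn + (k + 1)) % n := by
        rw [pos_val, ← Nat.add_assoc]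
        exact fun h => succ_mod_ne hn _ h.symm
      rw [F_nonhole σ₀ hn (k + 1) _ ha]
      have hda : dd σ₀ hn (k + 1) (pos hn (q σ₀ hn + k)) = n - 2 := by
        refine dd_eq σ₀ hn (k + 1) _ (by omega) ?_
        rw [pos_val, (by omega : q σ₀ hn + (k + 1) + 1 + (n - 2) = q σ₀ hn + k + n),
          Nat.add_mod_right]
      rw [hda]
      have : (k + 1 + (n - 2)) % (n - 1) = (k + 0) % (n - 1) := by
        rw [(by omega : k + 1 + (n - 2) = k + 0 + (n - 1)), Nat.add_mod_right]
      rw [this]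
    · simp only [Function.comp_apply, Equiv.swap_apply_of_ne_of_ne h0 h1]
      have hx0 : x.val ≠ (q σ₀ hn + k) % n := by
        rw [eq_pos_iff hn] at h0; exact h0
      have hx1 : x.val ≠ (q σ₀ hn + (k + 1)) % n := by
        rw [eq_pos_iff hn] at h1; rw [← Nat.add_assoc]; exact h1
      rw [F_nonhole σ₀ hn k x hx0, F_nonhole σ₀ hn (k + 1) x hx1]
      have hd1 : dd σ₀ hn k x ≠ 0 := by
        intro h
        apply h1
        rw [eq_pos_iff hn, ← dd_spec σ₀ hn k x, h, Nat.add_zero]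
      have hdlt : dd σ₀ hn k x < n - 1 := dd_lt' σ₀ hn k x hx0
      have hda : dd σ₀ hn (k + 1) x = dd σ₀ hn k x - 1 := by
        refine dd_eq σ₀ hn (k + 1) x (by omega) ?_
        rw [(by omega : q σ₀ hn + (k + 1) + 1 + (dd σ₀ hn k x - 1)
          = q σ₀ hn + k + 1 + dd σ₀ hn k x), dd_spec]
      rw [hda, (by omega : k + 1 + (dd σ₀ hn k x - 1) = k + dd σ₀ hn k x)]

lemma F_congr (hn : 3 ≤ n) {k k' : ℕ} (h1 : k % n = k' % n)
    (h2 : k % (n - 1) = k' % (n - 1)) : F σ₀ hn k = F σ₀ hn k' := by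
  funext x
  have e1 : (q σ₀ hn + k) % n = (q σ₀ hn + k') % n := Nat.ModEq.add_left _ h1
  have e2 : (q σ₀ hn + k + 1) % n = (q σ₀ hn + k' + 1) % n := by
    rw [Nat.add_right_comm, Nat.add_right_comm (q σ₀ hn) k' 1]
    exact Nat.ModEq.add_left _ h1
  have e3 : dd σ₀ hn k x = dd σ₀ hn k' x := by
    simp only [dd]; rw [e2]
  have e4 : (k + dd σ₀ hn k x) % (n - 1) = (k' + dd σ₀ hn k' x) % (n - 1) := by
    rw [e3]; exact Nat.ModEq.add_right _ h2
  simp only [F]; rw [e1, e4]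

noncomputable def Φ (hn : 3 ≤ n) (k : ℕ) : Fin n ≃ Fin n :=
  Equiv.ofBijective (F σ₀ hn k) (Finite.injective_iff_bijective.1 (F_inj σ₀ hn k))

lemma Φ_apply (hn : 3 ≤ n) (k : ℕ) (x : Fin n) : Φ σ₀ hn k x = F σ₀ hn k x := rfl

lemma Φ_congr (hn : 3 ≤ n) {k k' : ℕ} (h : F σ₀ hn k = F σ₀ hn k') :
    Φ σ₀ hn k = Φ σ₀ hn k' :=
  Equiv.ext fun x => congrFun h x

lemma modeq_out (hn : 3 ≤ n) {a b : ℕ} (h : a ≡ b [MOD n]) (hb : b < n) : a % n = b := by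
  rw [h]; exact Nat.mod_eq_of_lt hb

lemma sub_pos_val (hn : 3 ≤ n) (s : ℕ) (b : Fin n) :
    (b - pos hn s).val = (n - s % n + b.val) % n := by
  rw [Fin.sub_def]
  rfl

lemma key1 (hn : 3 ≤ n) (s : ℕ) : (n - s % n + (s + 1) % n) % n = 1 := by
  have hr : s % n < n := Nat.mod_lt _ (by omega)
  refine modeq_out hn ?_ (by omega)
  calc n - s % n + (s + 1) % n
      ≡ n - s % n + (s % n + 1) [MOD n] :=
        Nat.ModEq.add_left _
          ((Nat.mod_modEq (s + 1) n).trans (Nat.ModEq.add_right 1 (Nat.mod_modEq s n)).symm)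
    _ = n + 1 := by omega
    _ ≡ 1 [MOD n] := by
        show (n + 1) % n = 1 % n
        rw [Nat.add_comm, Nat.add_mod_right]

lemma adj_pos_succ (hn : 3 ≤ n) (s : ℕ) :
    (cycleGraph n).Adj (pos hn s) (pos hn (s + 1)) := by
  rw [cycleGraph_adj']
  right
  rw [sub_pos_val hn s, pos_val, key1 hn s]

lemma sub_one_decode (hn : 3 ≤ n) (s : ℕ) {b : Fin n} (h : (b - pos hn s).val = 1) :
    b = pos hn (s + 1) := by
  rw [sub_pos_val hn s] at h
  have h2 : (n - s % n + b.val) % n = (n - s % n + (s + 1) % n) % n := by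
    rw [h, key1 hn s]
  have h3 := add_mod_cancel b.isLt (Nat.mod_lt _ (by omega)) h2
  exact (eq_pos_iff hn).2 h3

lemma sub_one_decode' (hn : 3 ≤ n) (s : ℕ) {a b : Fin n} (h : (a - b).val = 1)
    (ha : a = pos hn (s + 1)) : b = pos hn s := by
  haveI : NeZero n := ⟨by omega⟩
  have h2 : (a - pos hn s).val = 1 := by
    have : (pos hn (s + 1) - pos hn s).val = 1 := by
      rw [sub_pos_val hn s, pos_val, key1 hn s]
    rw [ha]; exact this
  have h3 : a - b = a - pos hn s := Fin.ext (h.trans h2.symm)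
  exact (sub_right_inj).1 h3

lemma ctr_val (hn : 3 ≤ n) : (ctr hn).val = n - 1 := rfl

lemma adj_succ (hn : 3 ≤ n) (k : ℕ) :
    (FS (cycleGraph n) (_root_.starGraph n)).Adj (Φ σ₀ hn k) (Φ σ₀ hn (k + 1)) := by
  refine ⟨pos hn (q σ₀ hn + k), pos hn (q σ₀ hn + k + 1), adj_pos_succ hn _, ?_, ?_, ?_, ?_⟩
  · constructor
    · intro h
      have h2 := (Φ σ₀ hn k).injective h
      rw [pos_inj] at h2
      exact succ_mod_ne hn _ h2.symm
    · left
      show (Φ σ₀ hn k (pos hn (q σ₀ hn + k))).val = n - 1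
      rw [Φ_apply, F_hole]
      rfl
  · rw [Φ_apply, Φ_apply, F_succ]
    simp [Equiv.swap_apply_left]
  · rw [Φ_apply, Φ_apply, F_succ]
    simp [Equiv.swap_apply_right]
  · intro c hca hcb
    rw [Φ_apply, Φ_apply, F_succ]
    simp [Equiv.swap_apply_of_ne_of_ne hca hcb]

lemma N_ge (hn : 3 ≤ n) : 6 ≤ n * (n - 1) := by
  have h := Nat.mul_le_mul hn (show 2 ≤ n - 1 by omega)
  omega

lemma neighbor_aux (hn : 3 ≤ n) (k : ℕ) (τ : Fin n ≃ Fin n) (a b : Fin n)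
    (hX : (cycleGraph n).Adj a b) (ha : a = pos hn (q σ₀ hn + k))
    (hτ : ∀ x, τ x = F σ₀ hn k (Equiv.swap a b x)) :
    τ = Φ σ₀ hn (k + 1) ∨ τ = Φ σ₀ hn (k + (n * (n - 1) - 1)) := by
  have hmul : n * (n - 1) = n * (n - 2) + n := by
    rw [(by omega : n - 1 = (n - 2) + 1), Nat.mul_add, Nat.mul_one]
  have hN6 := N_ge (n := n) hn
  rw [cycleGraph_adj'] at hX
  rcases hX with h | h
  · -- (a - b).val = 1, so b is "behind" a
    right
    have ha' : a = pos hn ((q σ₀ hn + k + (n - 1)) + 1) := by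
      rw [ha, pos_inj]
      rw [(by omega : q σ₀ hn + k + (n - 1) + 1 = q σ₀ hn + k + n), Nat.add_mod_right]
    have hb : b = pos hn (q σ₀ hn + k + (n - 1)) := sub_one_decode' hn _ h ha'
    set k' := k + (n * (n - 1) - 1) with hk'
    have hkk : k' + 1 = k + n * (n - 1) := by omega
    have hcong1 : (k' + 1) % n = k % n := by
      rw [hkk]; exact Nat.add_mul_mod_self_left k n (n - 1)
    have hcong2 : (k' + 1) % (n - 1) = k % (n - 1) := by
      rw [hkk, Nat.mul_comm]; exact Nat.add_mul_mod_self_left k (n - 1) n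
    have hF : F σ₀ hn k = F σ₀ hn k' ∘
        (Equiv.swap (pos hn (q σ₀ hn + k')) (pos hn (q σ₀ hn + k' + 1))) := by
      rw [← F_succ σ₀ hn k']
      exact F_congr σ₀ hn hcong1.symm hcong2.symm
    have hpa : pos hn (q σ₀ hn + k' + 1) = a := by
      rw [ha, pos_inj, (by omega : q σ₀ hn + k' + 1 = q σ₀ hn + k + n * (n - 1))]
      exact Nat.add_mul_mod_self_left _ n (n - 1)
    have hpb : pos hn (q σ₀ hn + k') = b := by
      rw [hb, pos_inj,
        (by omega : q σ₀ hn + k' = (q σ₀ hn + k + (n - 1)) + n * (n - 2))]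
      exact Nat.add_mul_mod_self_left _ n (n - 2)
    refine Equiv.ext fun x => ?_
    rw [hτ x, hF, Φ_apply]
    simp only [Function.comp_apply]
    rw [hpa, hpb, Equiv.swap_comm b a, Equiv.swap_apply_self]
  · -- (b - a).val = 1
    left
    have hb : b = pos hn (q σ₀ hn + k + 1) := sub_one_decode hn _ (ha ▸ h)
    refine Equiv.ext fun x => ?_
    rw [hτ x, Φ_apply, F_succ]
    simp only [Function.comp_apply]
    rw [ha, hb]

lemma neighbor (hn : 3 ≤ n) (k : ℕ) (τ : Fin n ≃ Fin n)
    (h : (FS (cycleGraph n) (_root_.starGraph n)).Adj (Φ σ₀ hn k) τ) :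
    τ = Φ σ₀ hn (k + 1) ∨ τ = Φ σ₀ hn (k + (n * (n - 1) - 1)) := by
  obtain ⟨a, b, hX, hY, h1, h2, h3⟩ := h
  have hτ : ∀ x, τ x = F σ₀ hn k (Equiv.swap a b x) := by
    intro x
    by_cases hxa : x = a
    · subst hxa; rw [Equiv.swap_apply_left]; exact h1
    · by_cases hxb : x = b
      · subst hxb; rw [Equiv.swap_apply_right]; exact h2
      · rw [Equiv.swap_apply_of_ne_of_ne hxa hxb]; exact h3 x hxa hxb
  rcases hY.2 with hc | hc
  · -- σ a = ctr, so a is the hole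
    have ha : a = pos hn (q σ₀ hn + k) := by
      have h5 : F σ₀ hn k a = ctr hn := Fin.ext hc
      exact (eq_pos_iff hn).2 ((F_eq_ctr_iff σ₀ hn k a).1 h5)
    exact neighbor_aux σ₀ hn k τ a b hX ha hτ
  · have hb : b = pos hn (q σ₀ hn + k) := by
      have h5 : F σ₀ hn k b = ctr hn := Fin.ext hc
      exact (eq_pos_iff hn).2 ((F_eq_ctr_iff σ₀ hn k b).1 h5)
    have hτ' : ∀ x, τ x = F σ₀ hn k (Equiv.swap b a x) := by
      intro x; rw [Equiv.swap_comm]; exact hτ x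
    exact neighbor_aux σ₀ hn k τ b a hX.symm hb hτ'

lemma F_zero (hn : 3 ≤ n) : F σ₀ hn 0 = ⇑σ₀ := by
  funext x
  by_cases hx : x.val = (q σ₀ hn + 0) % n
  · rw [F, if_pos hx]
    have hq : (q σ₀ hn + 0) % n = q σ₀ hn := by
      rw [Nat.add_zero]; exact Nat.mod_eq_of_lt (q_lt σ₀ hn)
    have hx2 : x = σ₀.symm (ctr hn) := Fin.ext (by rw [hx, hq]; rfl)
    rw [hx2, Equiv.apply_symm_apply]
  · rw [F_nonhole σ₀ hn 0 x hx]
    congr 1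
    have hd : dd σ₀ hn 0 x < n - 1 := dd_lt' σ₀ hn 0 x hx
    rw [(by rw [Nat.zero_add]; exact Nat.mod_eq_of_lt hd : (0 + dd σ₀ hn 0 x) % (n - 1)
      = dd σ₀ hn 0 x)]
    symm
    rw [eq_pos_iff hn, ← dd_spec σ₀ hn 0 x]

lemma Φ_zero (hn : 3 ≤ n) : Φ σ₀ hn 0 = σ₀ :=
  Equiv.ext fun x => congrFun (F_zero σ₀ hn) x

lemma reach (hn : 3 ≤ n) (k : ℕ) :
    (FS (cycleGraph n) (_root_.starGraph n)).Reachable (Φ σ₀ hn 0) (Φ σ₀ hn k) := by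
  induction k with
  | zero => exact Reachable.refl _
  | succ k ih => exact ih.trans (adj_succ σ₀ hn k).reachable

lemma walk_mem (hn : 3 ≤ n) {u v : Fin n ≃ Fin n}
    (w : (FS (cycleGraph n) (_root_.starGraph n)).Walk u v) :
    (∃ k, u = Φ σ₀ hn k) → ∃ k, v = Φ σ₀ hn k := by
  induction w with
  | nil => exact id
  | cons h p ih =>
    rintro ⟨k, rfl⟩
    apply ih
    rcases neighbor σ₀ hn k _ h with h2 | h2
    exacts [⟨k + 1, h2⟩, ⟨_, h2⟩]

lemma F_inj_mod (hn : 3 ≤ n) {k k' : ℕ} (hk : k < n * (n - 1)) (hk' : k' < n * (n - 1))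
    (h : F σ₀ hn k = F σ₀ hn k') : k = k' := by
  have step1 : k % n = k' % n := by
    have h1 : F σ₀ hn k' (pos hn (q σ₀ hn + k)) = ctr hn := by
      rw [← h]; exact F_hole σ₀ hn k
    have h2 := (F_eq_ctr_iff σ₀ hn k' _).1 h1
    rw [pos_val] at h2
    exact Nat.ModEq.add_left_cancel' (q σ₀ hn) h2
  have step2 : k % (n - 1) = k' % (n - 1) := by
    set x := pos hn (q σ₀ hn + k + 1) with hxdef
    have hqkk : (q σ₀ hn + k + 1) % n = (q σ₀ hn + k' + 1) % n := by
      rw [Nat.add_right_comm, Nat.add_right_comm (q σ₀ hn) k' 1]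
      exact Nat.ModEq.add_left _ step1
    have hx : x.val ≠ (q σ₀ hn + k) % n := by rw [hxdef, pos_val]; exact succ_mod_ne hn _
    have hx' : x.val ≠ (q σ₀ hn + k') % n := by
      rw [hxdef, pos_val, hqkk]
      exact succ_mod_ne hn _
    have d1 : dd σ₀ hn k x = 0 :=
      dd_eq σ₀ hn k x (by omega) (by rw [hxdef, pos_val, Nat.add_zero])
    have d2 : dd σ₀ hn k' x = 0 :=
      dd_eq σ₀ hn k' x (by omega) (by rw [hxdef, pos_val, Nat.add_zero, hqkk])
    have h3 : F σ₀ hn k x = F σ₀ hn k' x := congrFun h x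
    rw [F_nonhole σ₀ hn k x hx, F_nonhole σ₀ hn k' x hx', d1, d2] at h3
    have h4 := σ₀.injective h3
    rw [pos_inj] at h4
    have h5 := add_mod_cancel (N := n)
      (Nat.lt_of_lt_of_le (Nat.mod_lt _ (by omega)) (by omega : n - 1 ≤ n))
      (Nat.lt_of_lt_of_le (Nat.mod_lt _ (by omega)) (by omega : n - 1 ≤ n)) h4
    simpa using h5
  have hco : Nat.Coprime n (n - 1) := by
    have h7 : Nat.Coprime (1 + (n - 1)) (n - 1) :=
      Nat.coprime_add_self_left.2 (Nat.coprime_one_left _)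
    rwa [(by omega : 1 + (n - 1) = n)] at h7
  exact mod_inj hk hk' ((Nat.modEq_and_modEq_iff_modEq_mul hco).1 ⟨step1, step2⟩)

lemma Φ_inj_mod (hn : 3 ≤ n) {k k' : ℕ} (hk : k < n * (n - 1)) (hk' : k' < n * (n - 1))
    (h : Φ σ₀ hn k = Φ σ₀ hn k') : k = k' := by
  refine F_inj_mod σ₀ hn hk hk' ?_
  funext x
  exact congrFun (congrArg (fun e : Fin n ≃ Fin n => ⇑e) h) x

lemma Φ_mod (hn : 3 ≤ n) (k : ℕ) : Φ σ₀ hn (k % (n * (n - 1))) = Φ σ₀ hn k := by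
  refine Φ_congr σ₀ hn (F_congr σ₀ hn ?_ ?_)
  · exact Nat.mod_mod_of_dvd k ⟨n - 1, rfl⟩
  · exact Nat.mod_mod_of_dvd k ⟨n, Nat.mul_comm n (n - 1)⟩

end FS10


open FS10 in
/-- Every connected component of `FS(Cycle_n, Star_n)` (as an induced subgraph) is
isomorphic to the cycle graph on `n(n-1)` vertices. -/
theorem stmt10 (n : ℕ) (hn : 3 ≤ n)
    (c : (FS (cycleGraph n) (_root_.starGraph n)).ConnectedComponent) :
    Nonempty
      (((FS (cycleGraph n) (_root_.starGraph n)).induce c.supp) ≃g cycleGraph (n * (n - 1))) := by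
  classical
  have hN6 : 6 ≤ n * (n - 1) := N_ge hn
  haveI : NeZero (n * (n - 1)) := ⟨by omega⟩
  obtain ⟨σ₀, hc⟩ := c.exists_rep
  have hmem : ∀ k : ℕ, Φ σ₀ hn k ∈ c.supp := by
    intro k
    rw [ConnectedComponent.mem_supp_iff, ← hc]
    have hr := reach σ₀ hn k
    rw [Φ_zero σ₀ hn] at hr
    exact ConnectedComponent.eq.2 hr.symm
  have hval_one : (1 : Fin (n * (n - 1))).val = 1 := by
    rw [Fin.val_one']; exact Nat.mod_eq_of_lt (by omega)
  have hadd : ∀ a : Fin (n * (n - 1)), (a + 1).val = (a.val + 1) % (n * (n - 1)) := by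
    intro a
    rw [Fin.add_def, hval_one]
  have ginj : Function.Injective
      (fun k : Fin (n * (n - 1)) => (⟨Φ σ₀ hn k.val, hmem k.val⟩ : c.supp)) := by
    intro k k' h
    rw [Subtype.mk.injEq] at h
    exact Fin.ext (Φ_inj_mod σ₀ hn k.isLt k'.isLt h)
  have gsurj : Function.Surjective
      (fun k : Fin (n * (n - 1)) => (⟨Φ σ₀ hn k.val, hmem k.val⟩ : c.supp)) := by
    rintro ⟨σ, hσ⟩
    rw [ConnectedComponent.mem_supp_iff, ← hc] at hσ
    obtain ⟨w⟩ := (ConnectedComponent.eq.1 hσ).symm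
    obtain ⟨k, rfl⟩ := walk_mem σ₀ hn w ⟨0, (Φ_zero σ₀ hn).symm⟩
    refine ⟨⟨k % (n * (n - 1)), Nat.mod_lt _ (by omega)⟩, ?_⟩
    simp only [Subtype.mk.injEq]
    exact Φ_mod σ₀ hn k
  have step : ∀ k k' : Fin (n * (n - 1)), (k' - k).val = 1 →
      (FS (cycleGraph n) (_root_.starGraph n)).Adj (Φ σ₀ hn k.val) (Φ σ₀ hn k'.val) := by
    intro k k' h
    have h1 : k' - k = 1 := Fin.ext (by rw [h, hval_one])
    rw [sub_eq_iff_eq_add] at h1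
    have hkk : k' = k + 1 := by rw [h1, add_comm]
    have hval : k'.val = (k.val + 1) % (n * (n - 1)) := by rw [hkk, hadd]
    have hΦ : Φ σ₀ hn k'.val = Φ σ₀ hn (k.val + 1) := by rw [hval, Φ_mod]
    rw [hΦ]
    exact adj_succ σ₀ hn k.val
  have key : ∀ k k' : Fin (n * (n - 1)),
      (FS (cycleGraph n) (_root_.starGraph n)).Adj (Φ σ₀ hn k.val) (Φ σ₀ hn k'.val) →
      (cycleGraph (n * (n - 1))).Adj k k' := by
    intro k k' h
    rw [cycleGraph_adj']
    rcases neighbor σ₀ hn k.val _ h with h2 | h2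
    · right
      have h3 : Φ σ₀ hn k'.val = Φ σ₀ hn ((k.val + 1) % (n * (n - 1))) := by
        rw [Φ_mod]; exact h2
      have h4 : k'.val = (k.val + 1) % (n * (n - 1)) :=
        Φ_inj_mod σ₀ hn k'.isLt (Nat.mod_lt _ (by omega)) h3
      have hkk : k' = k + 1 := Fin.ext (by rw [hadd, h4])
      rw [hkk, add_sub_cancel_left, hval_one]
    · left
      have h3 : Φ σ₀ hn k'.val = Φ σ₀ hn ((k.val + (n * (n - 1) - 1)) % (n * (n - 1))) := by
        rw [Φ_mod]; exact h2
      have h4 : k'.val = (k.val + (n * (n - 1) - 1)) % (n * (n - 1)) :=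
        Φ_inj_mod σ₀ hn k'.isLt (Nat.mod_lt _ (by omega)) h3
      have harith : ((k.val + (n * (n - 1) - 1)) % (n * (n - 1)) + 1) % (n * (n - 1))
          = k.val := by
        calc ((k.val + (n * (n - 1) - 1)) % (n * (n - 1)) + 1) % (n * (n - 1))
            = ((k.val + (n * (n - 1) - 1)) % (n * (n - 1)) + 1 % (n * (n - 1)))
              % (n * (n - 1)) := by
              rw [Nat.mod_eq_of_lt (show (1 : ℕ) < n * (n - 1) by omega)]
          _ = (k.val + (n * (n - 1) - 1) + 1) % (n * (n - 1)) := (Nat.add_mod _ _ _).symm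
          _ = (k.val + n * (n - 1)) % (n * (n - 1)) := by
              rw [(by omega : k.val + (n * (n - 1) - 1) + 1 = k.val + n * (n - 1))]
          _ = k.val := by rw [Nat.add_mod_right, Nat.mod_eq_of_lt k.isLt]
      have hkk : k = k' + 1 := Fin.ext (by rw [hadd, h4, harith])
      rw [hkk, add_sub_cancel_left, hval_one]
  refine ⟨RelIso.symm ?_⟩
  refine { toEquiv := Equiv.ofBijective _ ⟨ginj, gsurj⟩, map_rel_iff' := ?_ }
  intro k k'
  constructor
  · intro h
    exact key k k' h
  · intro h
    rcases cycleGraph_adj'.1 h with h1 | h1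
    · exact (step k' k h1).symm
    · exact step k k' h1
end

section
/- Let X be a simple graph on n vertices with finite girth g(X). Then the girth of FS(X, Star_n) satisfies g(FS(X, Star_n)) ≤ g(X) · (g(X) − 1). -/
open SimpleGraph

/-- Position `i` on the cycle holds the token with initial position `phi g t i`
after `t` steps of rotating the hole around a `g`-cycle. -/
def phi (g t i : ℕ) : ℕ :=
  if i = t % g then 0
  else if i < t % g then (i + t / g) % (g - 1) + 1
  else (i - 1 + t / g) % (g - 1) + 1

lemma succ_mod_div (g t : ℕ) (hg : 2 ≤ g) :
    (t % g + 1 < g ∧ (t + 1) % g = t % g + 1 ∧ (t + 1) / g = t / g) ∨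
    (t % g + 1 = g ∧ (t + 1) % g = 0 ∧ (t + 1) / g = t / g + 1) := by
  have hj : t % g < g := Nat.mod_lt _ (by omega)
  have hmod : (t + 1) % g = (t % g + 1) % g := by
    conv_lhs => rw [Nat.add_mod]
    rw [Nat.mod_eq_of_lt (show 1 < g by omega)]
  have hdiv := Nat.succ_div (a := t) (b := g)
  rcases Nat.lt_or_ge (t % g + 1) g with h | h
  · left
    have hm : (t + 1) % g = t % g + 1 := hmod.trans (Nat.mod_eq_of_lt h)
    refine ⟨h, hm, ?_⟩
    rw [hdiv, if_neg, add_zero]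
    intro hdvd
    rw [Nat.dvd_iff_mod_eq_zero] at hdvd
    omega
  · right
    have h' : t % g + 1 = g := by omega
    have hm : (t + 1) % g = 0 := by rw [hmod, h', Nat.mod_self]
    refine ⟨h', hm, ?_⟩
    rw [hdiv, if_pos]
    rw [Nat.dvd_iff_mod_eq_zero]
    exact hm

lemma phi_lt (g t i : ℕ) (hg : 3 ≤ g) (hi : i < g) : phi g t i < g := by
  have h1 : (i + t / g) % (g - 1) < g - 1 := Nat.mod_lt _ (by omega)
  have h2 : (i - 1 + t / g) % (g - 1) < g - 1 := Nat.mod_lt _ (by omega)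
  unfold phi
  split
  · omega
  · split <;> omega

lemma phi_zero (g i : ℕ) (hg : 3 ≤ g) (hi : i < g) : phi g 0 i = i := by
  unfold phi
  rw [Nat.zero_mod, Nat.zero_div]
  split
  · omega
  · rw [if_neg (by omega), add_zero, Nat.mod_eq_of_lt (by omega)]
    omega

lemma phi_close (g i : ℕ) (hg : 3 ≤ g) (hi : i < g) : phi g (g * (g - 1)) i = i := by
  unfold phi
  rw [Nat.mul_mod_right, Nat.mul_div_cancel_left _ (show 0 < g by omega)]
  split
  · omega
  · rw [if_neg (by omega), Nat.add_mod_right, Nat.mod_eq_of_lt (by omega)]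
    omega

lemma phi_hole (g t : ℕ) : phi g t (t % g) = 0 := by
  unfold phi; rw [if_pos rfl]

lemma phi_ne_zero (g t i : ℕ) (hi : i ≠ t % g) : phi g t i ≠ 0 := by
  unfold phi; rw [if_neg hi]; split <;> omega

lemma phi_succ_hole (g t : ℕ) (hg : 3 ≤ g) :
    phi g (t + 1) (t % g) = phi g t ((t + 1) % g) := by
  have hj : t % g < g := Nat.mod_lt _ (by omega)
  rcases succ_mod_div g t (by omega) with ⟨h1, h2, h3⟩ | ⟨h1, h2, h3⟩
  · unfold phi
    rw [h2, h3, if_neg (show ¬ t % g = t % g + 1 by omega),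
      if_pos (show t % g < t % g + 1 by omega),
      if_neg (show ¬ t % g + 1 = t % g by omega)]
    rw [if_neg (show ¬ t % g + 1 < t % g by omega)]
    congr 2
  · unfold phi
    rw [h2, h3, if_neg (by omega), if_neg (by omega), if_neg (by omega), if_pos (by omega)]
    have e1 : t % g - 1 + (t / g + 1) = (g - 1) + t / g := by omega
    rw [e1, Nat.add_mod_left, Nat.zero_add]

lemma phi_succ_hole' (g t : ℕ) : phi g (t + 1) ((t + 1) % g) = 0 := phi_hole g (t + 1)

lemma phi_succ_other (g t i : ℕ) (hg : 3 ≤ g) (hi : i < g) (h1 : i ≠ t % g)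
    (h2 : i ≠ (t + 1) % g) : phi g (t + 1) i = phi g t i := by
  have hj : t % g < g := Nat.mod_lt _ (by omega)
  rcases succ_mod_div g t (by omega) with ⟨hc1, hc2, hc3⟩ | ⟨hc1, hc2, hc3⟩
  · unfold phi
    rw [hc2, hc3, if_neg (by omega), if_neg h1]
    rcases Nat.lt_or_ge i (t % g) with hlt | hge
    · rw [if_pos (by omega), if_pos hlt]
    · rw [if_neg (by omega), if_neg (by omega)]
  · -- t % g = g - 1, new hole at 0, so 1 ≤ i ≤ g - 2, i.e. i < t % g
    have hi0 : i ≠ 0 := by rw [hc2] at h2; exact h2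
    unfold phi
    rw [hc2, hc3, if_neg hi0, if_neg (show ¬ i < 0 by omega), if_neg h1,
      if_pos (show i < t % g by omega)]
    have e1 : i - 1 + (t / g + 1) = i + t / g := by omega
    rw [e1]

lemma phi_inj (g s t : ℕ) (hg : 3 ≤ g) (hs : s < g * (g - 1)) (ht : t < g * (g - 1))
    (h : ∀ i, i < g → phi g s i = phi g t i) : s = t := by
  have hg0 : 0 < g := by omega
  have hjs : s % g < g := Nat.mod_lt _ hg0
  have hjt : t % g < g := Nat.mod_lt _ hg0
  have hj : s % g = t % g := by
    by_contra hne
    have := h (s % g) hjs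
    rw [phi_hole] at this
    exact phi_ne_zero g t (s % g) hne this.symm
  have hks : s / g < g - 1 := by
    rw [Nat.div_lt_iff_lt_mul hg0]
    calc s < g * (g - 1) := hs
    _ = (g - 1) * g := Nat.mul_comm _ _
  have hkt : t / g < g - 1 := by
    rw [Nat.div_lt_iff_lt_mul hg0]
    calc t < g * (g - 1) := ht
    _ = (g - 1) * g := Nat.mul_comm _ _
  have hk : s / g = t / g := by
    rcases Nat.eq_zero_or_pos (s % g) with h0 | h0
    · have h1 := h 1 (by omega)
      unfold phi at h1
      rw [if_neg (show ¬ (1:ℕ) = s % g by omega), if_neg (show ¬ (1:ℕ) < s % g by omega),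
        if_neg (show ¬ (1:ℕ) = t % g by omega), if_neg (show ¬ (1:ℕ) < t % g by omega)] at h1
      rw [Nat.mod_eq_of_lt (show 1 - 1 + s / g < g - 1 by omega),
        Nat.mod_eq_of_lt (show 1 - 1 + t / g < g - 1 by omega)] at h1
      omega
    · have h1 := h 0 hg0
      unfold phi at h1
      rw [if_neg (show ¬ (0:ℕ) = s % g by omega), if_pos (show (0:ℕ) < s % g by omega),
        if_neg (show ¬ (0:ℕ) = t % g by omega), if_pos (show (0:ℕ) < t % g by omega)] at h1
      rw [Nat.mod_eq_of_lt (show 0 + s / g < g - 1 by omega),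
        Nat.mod_eq_of_lt (show 0 + t / g < g - 1 by omega)] at h1
      omega
  have es := Nat.div_add_mod s g
  have et := Nat.div_add_mod t g
  calc s = g * (s / g) + s % g := es.symm
  _ = g * (t / g) + t % g := by rw [hk, hj]
  _ = t := et

lemma support_eq_map_getVert {α : Type*} {G : SimpleGraph α} :
    ∀ {u v : α} (p : G.Walk u v), p.support = (List.range (p.length + 1)).map p.getVert := by
  intro u v p
  induction p with
  | nil => simp [List.range_succ_eq_map]
  | @cons u v w h q ih =>
    rw [Walk.support_cons, ih, Walk.length_cons, List.range_succ_eq_map (n := q.length + 1),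
      List.map_cons, List.map_map]
    rfl

lemma cycle_getVert_inj1 {α : Type*} {G : SimpleGraph α} {u : α} {w : G.Walk u u}
    (hw : w.IsCycle) {s t : ℕ} (hs0 : 1 ≤ s) (hs : s ≤ w.length) (ht0 : 1 ≤ t)
    (ht : t ≤ w.length) (h : w.getVert s = w.getVert t) : s = t := by
  have htail := hw.2
  rw [support_eq_map_getVert, List.range_succ_eq_map, List.map_cons, List.tail_cons,
    List.map_map] at htail
  have hinj := List.inj_on_of_nodup_map htail
  have h1 : s - 1 ∈ List.range w.length := by simp; omega
  have h2 : t - 1 ∈ List.range w.length := by simp; omega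
  have := hinj h1 h2 (by
    show w.getVert (s - 1 + 1) = w.getVert (t - 1 + 1)
    rw [Nat.sub_add_cancel hs0, Nat.sub_add_cancel ht0]; exact h)
  omega

lemma cycle_getVert_inj {α : Type*} {G : SimpleGraph α} {u : α} {w : G.Walk u u}
    (hw : w.IsCycle) {s t : ℕ} (hs : s < w.length) (ht : t < w.length)
    (h : w.getVert s = w.getVert t) : s = t := by
  have h0 : w.getVert 0 = w.getVert w.length := by
    rw [Walk.getVert_length, Walk.getVert_zero]
  have hlen := hw.three_le_length
  rcases Nat.eq_zero_or_pos s with rfl | hs1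
  · rcases Nat.eq_zero_or_pos t with rfl | ht1
    · rfl
    · have := cycle_getVert_inj1 hw (by omega : 1 ≤ w.length) (le_refl w.length) ht1
        (by omega) (h0.symm.trans h)
      omega
  · rcases Nat.eq_zero_or_pos t with rfl | ht1
    · have := cycle_getVert_inj1 hw hs1 (by omega) (by omega : 1 ≤ w.length)
        (le_refl w.length) (h.trans h0)
      omega
    · exact cycle_getVert_inj1 hw hs1 (by omega) ht1 (by omega) h

lemma exists_walk_seq {α : Type*} (G : SimpleGraph α) (f : ℕ → α) :
    ∀ (k s m : ℕ), s + k = m → (∀ i, s ≤ i → i < m → G.Adj (f i) (f (i + 1))) →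
    ∃ w : G.Walk (f s) (f m), w.length = k ∧
      w.support = (List.range' s (k + 1)).map f ∧
      w.edges = (List.range' s k).map (fun i => s(f i, f (i + 1))) := by
  intro k
  induction k with
  | zero =>
    intro s m h _
    obtain rfl : s = m := by omega
    exact ⟨Walk.nil, rfl, by simp, by simp⟩
  | succ k ih =>
    intro s m h hadj
    obtain ⟨w, hl, hs, he⟩ := ih (s + 1) m (by omega) (fun i h1 h2 => hadj i (by omega) h2)
    refine ⟨Walk.cons (hadj s le_rfl (by omega)) w, by simp [hl], ?_, ?_⟩
    · simp [hs, List.range'_succ]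
    · simp [he, List.range'_succ]

lemma exists_cycle_seq {α : Type*} (G : SimpleGraph α) (f : ℕ → α) (m : ℕ) (hm : 3 ≤ m)
    (hadj : ∀ i, i < m → G.Adj (f i) (f (i + 1))) (hclose : f m = f 0)
    (hinj : ∀ s t, s < m → t < m → f s = f t → s = t) :
    ∃ w : G.Walk (f 0) (f 0), w.IsCycle ∧ w.length = m := by
  obtain ⟨p, hl, hs, he⟩ := exists_walk_seq G f (m - 1) 1 m (by omega)
    (fun i h1 h2 => hadj i h2)
  -- p : G.Walk (f 1) (f m)
  have hinj' : ∀ s t, 1 ≤ s → s ≤ m → 1 ≤ t → t ≤ m → f s = f t → s = t := by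
    intro s t hs1 hs2 ht1 ht2 hf
    rcases Nat.lt_or_ge s m with hsm | hsm
    · rcases Nat.lt_or_ge t m with htm | htm
      · exact hinj s t hsm htm hf
      · have hf0 : f s = f 0 := by rw [hf, show t = m by omega]; exact hclose
        exact absurd (hinj s 0 hsm (by omega) hf0) (by omega)
    · rcases Nat.lt_or_ge t m with htm | htm
      · have hf0 : f 0 = f t := by rw [← hf, show s = m by omega]; exact hclose.symm
        exact absurd (hinj 0 t (by omega) htm hf0) (by omega)
      · omega
  have hpath : p.IsPath := by
    rw [Walk.isPath_def, hs]
    have : m - 1 + 1 = m := by omega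
    rw [this]
    apply List.Nodup.map_on
    · intro x hx y hy hxy
      rw [List.mem_range'_1] at hx hy
      exact hinj' x y hx.1 (by omega) hy.1 (by omega) hxy
    · exact List.nodup_range'
  have hedge : s(f 0, f 1) ∉ p.edges := by
    rw [he]
    intro hmem
    rw [List.mem_map] at hmem
    obtain ⟨i, hi, hie⟩ := hmem
    rw [List.mem_range'_1] at hi
    rw [Sym2.eq_iff] at hie
    rcases hie with ⟨h1, h2⟩ | ⟨h1, h2⟩
    · exact absurd (hinj 0 i (by omega) (by omega) h1.symm) (by omega)
    · -- f i = f 1, f (i+1) = f 0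
      have hi1 : i + 1 = m := by
        by_contra hne
        exact absurd (hinj 0 (i + 1) (by omega) (by omega) h2.symm) (by omega)
      have := hinj 1 i (by omega) (by omega) h1.symm
      omega
  have hadj01 : G.Adj (f 0) (f 1) := hadj 0 (by omega)
  refine ⟨Walk.cons hadj01 (p.copy rfl hclose), ?_, ?_⟩
  · rw [Walk.cons_isCycle_iff]
    exact ⟨(Walk.isPath_copy _ _ _).mpr hpath, by rwa [Walk.edges_copy]⟩
  · simp [hl]; omega

/-- The permutation of `V` after `t` hole-sliding steps along the cyclic sequence `u`. -/
def Pperm {V : Type*} [DecidableEq V] (u : ℕ → V) : ℕ → (V ≃ V)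
  | 0 => Equiv.refl V
  | t + 1 => (Equiv.swap (u t) (u (t + 1))).trans (Pperm u t)

lemma Pperm_key {V : Type*} [DecidableEq V] (g : ℕ) (hg : 3 ≤ g) (u : ℕ → V)
    (hper : ∀ i, u i = u (i % g)) (hinj : ∀ s t, s < g → t < g → u s = u t → s = t)
    (t : ℕ) :
    (∀ i, i < g → (Pperm u t) (u i) = u (phi g t i)) ∧
    (∀ x, (∀ i, i < g → x ≠ u i) → (Pperm u t) x = x) := by
  induction t with
  | zero =>
    constructor
    · intro i hi
      rw [phi_zero g i hg hi]
      rfl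
    · intro x _
      rfl
  | succ t ih =>
    obtain ⟨ih1, ih2⟩ := ih
    have hjlt : t % g < g := Nat.mod_lt _ (by omega)
    have hj'lt : (t + 1) % g < g := Nat.mod_lt _ (by omega)
    have hne : t % g ≠ (t + 1) % g := by
      rcases succ_mod_div g t (by omega) with ⟨h1, h2, h3⟩ | ⟨h1, h2, h3⟩ <;> omega
    have hstep : ∀ x, (Pperm u (t + 1)) x = (Pperm u t) (Equiv.swap (u t) (u (t + 1)) x) :=
      fun x => rfl
    constructor
    · intro i hi
      rw [hstep]
      by_cases hij : i = t % g
      · rw [hij, ← hper t, Equiv.swap_apply_left, hper (t + 1), ih1 _ hj'lt,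
          phi_succ_hole g t hg]
      · by_cases hij' : i = (t + 1) % g
        · rw [hij', ← hper (t + 1), Equiv.swap_apply_right, hper t, ih1 _ hjlt,
            phi_hole, phi_succ_hole']
        · have h1 : u i ≠ u t := by
            rw [hper t]
            exact fun hcon => hij (hinj _ _ hi hjlt hcon)
          have h2 : u i ≠ u (t + 1) := by
            rw [hper (t + 1)]
            exact fun hcon => hij' (hinj _ _ hi hj'lt hcon)
          rw [Equiv.swap_apply_of_ne_of_ne h1 h2, ih1 i hi,
            phi_succ_other g t i hg hi hij hij']
    · intro x hx
      rw [hstep]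
      have h1 : x ≠ u t := by rw [hper t]; exact hx _ hjlt
      have h2 : x ≠ u (t + 1) := by rw [hper (t + 1)]; exact hx _ hj'lt
      rw [Equiv.swap_apply_of_ne_of_ne h1 h2]
      exact ih2 x hx

/-- If `X` has finite girth `g(X)`, then the girth of `FS(X, Star_n)` is at most
`g(X) · (g(X) - 1)`. -/
theorem stmt11 {V : Type} [Fintype V] (n : ℕ) (hV : Fintype.card V = n)
    (X : SimpleGraph V) (hfin : X.egirth ≠ ⊤) :
    (FS X (_root_.starGraph n)).egirth ≤ X.egirth * (X.egirth - 1) := by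
  classical
  have hnac : ¬ X.IsAcyclic := fun h => hfin (egirth_eq_top.mpr h)
  obtain ⟨a, w, hw, hwl⟩ := exists_egirth_eq_length.mpr hnac
  set g := w.length with hgdef
  have hg3 : 3 ≤ g := hw.three_le_length
  have hne : Nonempty V := ⟨a⟩
  have hn0 : 0 < n := hV ▸ Fintype.card_pos
  set u : ℕ → V := fun i => w.getVert (i % g) with hu
  have hper : ∀ i, u i = u (i % g) := by
    intro i
    simp only [hu]
    rw [Nat.mod_mod_of_dvd _ dvd_rfl]
  have huinj : ∀ s t, s < g → t < g → u s = u t → s = t := by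
    intro s t hs ht h
    simp only [hu, Nat.mod_eq_of_lt hs, Nat.mod_eq_of_lt ht] at h
    exact cycle_getVert_inj hw hs ht h
  have huadj : ∀ t : ℕ, X.Adj (u t) (u (t + 1)) := by
    intro t
    show X.Adj (w.getVert (t % g)) (w.getVert ((t + 1) % g))
    rcases succ_mod_div g t (by omega) with ⟨h1, h2, h3⟩ | ⟨h1, h2, h3⟩
    · rw [h2]
      exact w.adj_getVert_succ (show t % g < w.length by rw [← hgdef]; omega)
    · rw [h2]
      have h5 := w.adj_getVert_succ (i := g - 1) (show g - 1 < w.length by rw [← hgdef]; omega)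
      rw [show g - 1 + 1 = w.length by rw [← hgdef]; omega, Walk.getVert_length] at h5
      rw [show t % g = g - 1 by omega, Walk.getVert_zero]
      exact h5
  set center : Fin n := ⟨n - 1, by omega⟩ with hcenter
  set e0 : V ≃ Fin n := Fintype.equivFinOfCardEq hV with he0
  set σ₀ : V ≃ Fin n := e0.trans (Equiv.swap (e0 (u 0)) center) with hσ₀def
  have hσ₀ : σ₀ (u 0) = center := by
    simp [hσ₀def, Equiv.trans_apply, Equiv.swap_apply_left]
  set F : ℕ → (V ≃ Fin n) := fun t => (Pperm u t).trans σ₀ with hF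
  have hkey := Pperm_key g hg3 u hper huinj
  have hFapp : ∀ t x, F t x = σ₀ ((Pperm u t) x) := fun t x => rfl
  have hhole : ∀ t, F t (u (t % g)) = center := by
    intro t
    rw [hFapp, (hkey t).1 _ (Nat.mod_lt _ (by omega)), phi_hole]
    exact hσ₀
  have hstep : ∀ t x, F (t + 1) x = F t (Equiv.swap (u t) (u (t + 1)) x) :=
    fun t x => rfl
  have hFadj : ∀ t, (FS X (_root_.starGraph n)).Adj (F t) (F (t + 1)) := by
    intro t
    have hjlt : t % g < g := Nat.mod_lt _ (by omega)
    have hj'lt : (t + 1) % g < g := Nat.mod_lt _ (by omega)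
    have hnejj : t % g ≠ (t + 1) % g := by
      rcases succ_mod_div g t (by omega) with ⟨h1, h2, h3⟩ | ⟨h1, h2, h3⟩ <;> omega
    have hneu : u t ≠ u (t + 1) := by
      rw [hper t, hper (t + 1)]
      exact fun hcon => hnejj (huinj _ _ hjlt hj'lt hcon)
    have e1 : F t (u t) = center := by rw [hper t]; exact hhole t
    refine ⟨u t, u (t + 1), huadj t, ⟨(F t).injective.ne hneu, Or.inl ?_⟩, ?_, ?_, ?_⟩
    · rw [e1]
    · rw [hstep, Equiv.swap_apply_left]
    · rw [hstep, Equiv.swap_apply_right]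
    · intro c hca hcb
      rw [hstep, Equiv.swap_apply_of_ne_of_ne hca hcb]
  have hclose : F (g * (g - 1)) = F 0 := by
    apply Equiv.ext
    intro x
    have hF0 : F 0 x = σ₀ x := rfl
    rw [hF0, hFapp]
    by_cases hx : ∃ i, i < g ∧ x = u i
    · obtain ⟨i, hi, rfl⟩ := hx
      rw [(hkey _).1 i hi, phi_close g i hg3 hi]
    · push_neg at hx
      rw [(hkey _).2 x (fun i hi => hx i hi)]
  have hFinj : ∀ s t, s < g * (g - 1) → t < g * (g - 1) → F s = F t → s = t := by
    intro s t hs ht hFeq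
    apply phi_inj g s t hg3 hs ht
    intro i hi
    have hx : F s (u i) = F t (u i) := by rw [hFeq]
    rw [hFapp, hFapp, (hkey s).1 i hi, (hkey t).1 i hi] at hx
    exact huinj _ _ (phi_lt g s i hg3 hi) (phi_lt g t i hg3 hi) (σ₀.injective hx)
  have hm6 : 3 ≤ g * (g - 1) := by
    have := Nat.mul_le_mul hg3 (show 2 ≤ g - 1 by omega)
    omega
  obtain ⟨c, hcyc, hclen⟩ := exists_cycle_seq (FS X (_root_.starGraph n)) F (g * (g - 1)) hm6
    (fun i _ => hFadj i) hclose hFinj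
  have hle : (FS X (_root_.starGraph n)).egirth ≤ ((g * (g - 1) : ℕ) : ℕ∞) := by
    rw [← hclen]
    unfold SimpleGraph.egirth
    exact iInf_le_of_le (F 0) (iInf_le_of_le c (iInf_le _ hcyc))
  refine hle.trans (le_of_eq ?_)
  rw [hwl]
  rw [Nat.cast_mul, ENat.coe_sub, Nat.cast_one]
end
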